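/- arXiv:2011.06046 — 6 statements merged into one kernel-verified Lean document; each statement's English description precedes it below -/
import Mathlib

section
/- Let G = (X ∪ Y, E) be a finite bipartite graph with a fixed preference instance. Some stable matching is X-saturating if and only if every stable matching is X-saturating. -/
open SimpleGraph Finset

/-- A preference instance: each vertex ranks its neighbors injectively
(lower rank = more preferred). This encodes a strict linear order over neighbors. -/
def IsPrefInstance {V : Type*} (G : SimpleGraph V) (rank : V → V → ℕ) : Prop :=
  ∀ v : V, Set.InjOn (rank v) (G.neighborSet v)

/-- A vertex is matched in a subgraph if it has a partner. -/
def Matched {V : Type*} {G : SimpleGraph V} (M : G.Subgraph) (v : V) : Prop :=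
  ∃ w, M.Adj v w

/-- `M` is a stable matching: it is a matching of `G` and there is no blocking pair,
i.e. no edge `xy` of `G` not in `M` such that `x` is unmatched or prefers `y` to its
partner, and `y` is unmatched or prefers `x` to its partner. -/
def IsStableMatching {V : Type*} {G : SimpleGraph V} (rank : V → V → ℕ) (M : G.Subgraph) :
    Prop :=
  M.IsMatching ∧
    ¬ ∃ x y, G.Adj x y ∧ ¬ M.Adj x y ∧
      (∀ w, M.Adj x w → rank x y < rank x w) ∧
      (∀ w, M.Adj y w → rank y x < rank y w)

/-- `G` is bipartite with parts `X` and `Y`. -/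
def IsBipartiteWith {V : Type*} (G : SimpleGraph V) (X Y : Finset V) : Prop :=
  Disjoint X Y ∧ (∀ v : V, v ∈ X ∨ v ∈ Y) ∧
    ∀ ⦃a b : V⦄, G.Adj a b → (a ∈ X ∧ b ∈ Y) ∨ (a ∈ Y ∧ b ∈ X)

/-- The second neighborhood `N(N(x))`. -/
def NN {V : Type*} (G : SimpleGraph V) [Fintype V] [DecidableEq V] [DecidableRel G.Adj]
    (x : V) : Finset V :=
  (G.neighborFinset x).biUnion fun y => G.neighborFinset y

set_option linter.unusedSectionVars false

section Aux

variable {V : Type*} [Fintype V] [DecidableEq V] {G : SimpleGraph V}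

lemma matching_unique {M : G.Subgraph} (hM : M.IsMatching) {a b c : V}
    (h1 : M.Adj a b) (h2 : M.Adj a c) : b = c := by
  obtain ⟨w, _, huniq⟩ := hM (M.edge_vert h1)
  rw [huniq b h1, huniq c h2]

/-- One step of the McVitie–Wilson chain argument. -/
lemma mw_step {rank : V → V → ℕ} (hP : IsPrefInstance G rank)
    {M M' : G.Subgraph} (hM : IsStableMatching rank M) (hM' : IsStableMatching rank M')
    {x : V} (hx : Matched M x)
    (hpref : ∀ y y', M.Adj x y → M'.Adj x y' → rank x y < rank x y') :
    ∃ x' : V, (Matched M x' ∧ ∀ y y', M.Adj x' y → M'.Adj x' y' → rank x' y < rank x' y')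
      ∧ ∃ y, M.Adj x y ∧ M'.Adj y x' := by
  obtain ⟨y, hxy⟩ := hx
  have hxy' : ¬ M'.Adj x y := fun h => lt_irrefl _ (hpref y y hxy h)
  have hGxy : G.Adj x y := M.adj_sub hxy
  have hxcond : ∀ w, M'.Adj x w → rank x y < rank x w := fun w hw => hpref y w hxy hw
  have hy : ¬ ∀ w, M'.Adj y w → rank y x < rank y w := by
    intro hycond
    exact hM'.2 ⟨x, y, hGxy, hxy', hxcond, hycond⟩
  push_neg at hy
  obtain ⟨x', hyx', hle⟩ := hy
  have hne : x' ≠ x := fun h => hxy' ((h ▸ hyx').symm)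
  have hx'N : x' ∈ G.neighborSet y := (G.mem_neighborSet y x').2 (M'.adj_sub hyx')
  have hxN : x ∈ G.neighborSet y := (G.mem_neighborSet y x).2 (M.adj_sub hxy).symm
  have hlt : rank y x' < rank y x :=
    lt_of_le_of_ne hle (fun h => hne (hP y hx'N hxN h))
  have hMyx' : ¬ M.Adj y x' := fun h => hne (matching_unique hM.1 h hxy.symm)
  have hGyx' : G.Adj y x' := M'.adj_sub hyx'
  have hycond2 : ∀ w, M.Adj y w → rank y x' < rank y w := by
    intro w hw
    have hwx : w = x := matching_unique hM.1 hw hxy.symm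
    rw [hwx]; exact hlt
  have hx'fail : ¬ ∀ w, M.Adj x' w → rank x' y < rank x' w := by
    intro hc
    exact hM.2 ⟨y, x', hGyx', hMyx', hycond2, hc⟩
  push_neg at hx'fail
  obtain ⟨y'', hx'y'', hle2⟩ := hx'fail
  have hne2 : y'' ≠ y := fun h => hMyx' ((h ▸ hx'y'').symm)
  have hy''N : y'' ∈ G.neighborSet x' := (G.mem_neighborSet x' y'').2 (M.adj_sub hx'y'')
  have hyN : y ∈ G.neighborSet x' := (G.mem_neighborSet x' y).2 (M'.adj_sub hyx'.symm)
  have hlt2 : rank x' y'' < rank x' y :=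
    lt_of_le_of_ne hle2 (fun h => hne2 (hP x' hy''N hyN h))
  refine ⟨x', ⟨⟨y'', hx'y''⟩, ?_⟩, y, hxy, hyx'⟩
  intro a b ha hb
  have ha' : a = y'' := matching_unique hM.1 ha hx'y''
  have hb' : b = y := matching_unique hM'.1 hb hyx'.symm
  rw [ha', hb']; exact hlt2

/-- McVitie–Wilson / rural hospitals: the set of matched vertices is the same in every
stable matching. -/
lemma mw_key {rank : V → V → ℕ} (hP : IsPrefInstance G rank)
    {M M' : G.Subgraph} (hM : IsStableMatching rank M) (hM' : IsStableMatching rank M')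
    {x : V} (hx : Matched M x) : Matched M' x := by
  by_contra hx'
  set P : V → Prop := fun v =>
    Matched M v ∧ ∀ y y', M.Adj v y → M'.Adj v y' → rank v y < rank v y' with hP_def
  have h0 : P x := ⟨hx, fun y y' _ hy' => absurd ⟨y', hy'⟩ hx'⟩
  have key : ∀ s : {v // P v}, ∃ t : {v // P v}, ∃ y, M.Adj s.1 y ∧ M'.Adj y t.1 := by
    rintro ⟨v, hv1, hv2⟩
    obtain ⟨x', hx'P, hlink⟩ := mw_step hP hM hM' hv1 hv2
    exact ⟨⟨x', hx'P⟩, hlink⟩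
  choose f hf using key
  have hfinj : Function.Injective f := by
    intro a b hab
    obtain ⟨ya, ha1, ha2⟩ := hf a
    obtain ⟨yb, hb1, hb2⟩ := hf b
    rw [hab] at ha2
    have hyy : ya = yb := matching_unique hM'.1 ha2.symm hb2.symm
    rw [hyy] at ha1
    exact Subtype.ext (matching_unique hM.1 ha1.symm hb1.symm)
  have hrange : ∀ t, Matched M' (f t).1 := by
    intro t
    obtain ⟨y, _, h2⟩ := hf t
    exact ⟨y, h2.symm⟩
  have main : ∀ i j : ℕ, i < j → f^[i] ⟨x, h0⟩ = f^[j] ⟨x, h0⟩ → False := by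
    intro i j hij heq
    obtain ⟨k, hk⟩ : ∃ k, j = i + (k + 1) := ⟨j - i - 1, by omega⟩
    rw [hk, Function.iterate_add_apply] at heq
    have hs : (⟨x, h0⟩ : {v // P v}) = f^[k+1] ⟨x, h0⟩ := hfinj.iterate i heq
    rw [Function.iterate_succ_apply'] at hs
    have : Matched M' x := by
      have := hrange (f^[k] ⟨x, h0⟩)
      rwa [← hs] at this
    exact hx' this
  obtain ⟨i, j, hij, heq⟩ :=
    Finite.exists_ne_map_eq_of_infinite (fun n : ℕ => f^[n] ⟨x, h0⟩)
  rcases hij.lt_or_gt with h | h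
  · exact (main i j h heq).elim
  · exact (main j i h heq.symm).elim

end Aux

section GS

variable {V : Type*} [Fintype V] [DecidableEq V] (G : SimpleGraph V) [DecidableRel G.Adj]
  (X Y : Finset V) (rank : V → V → ℕ)

/-- Neighbors of `x` in `Y` not yet rejected. -/
def GSavail (R : Finset (V × V)) (x : V) : Finset V :=
  (G.neighborFinset x).filter fun y => (x, y) ∉ R ∧ y ∈ Y

/-- `x ∈ X` proposes to `y`: `y` is a most-preferred available neighbor of `x`. -/
def GSprop (R : Finset (V × V)) (x y : V) : Prop :=
  x ∈ X ∧ y ∈ GSavail G Y R x ∧ ∀ z ∈ GSavail G Y R x, rank x y ≤ rank x z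

open Classical in
/-- One round of deferred acceptance: add rejections of dominated proposals. -/
noncomputable def GSstep (R : Finset (V × V)) : Finset (V × V) :=
  R ∪ Finset.univ.filter fun p =>
    GSprop G X Y rank R p.1 p.2 ∧
      ∃ x', GSprop G X Y rank R x' p.2 ∧ rank p.2 x' < rank p.2 p.1

lemma subset_GSstep (R : Finset (V × V)) : R ⊆ GSstep G X Y rank R :=
  Finset.subset_union_left

lemma mem_GSstep {R : Finset (V × V)} {p : V × V} :
    p ∈ GSstep G X Y rank R ↔ p ∈ R ∨
      (GSprop G X Y rank R p.1 p.2 ∧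
        ∃ x', GSprop G X Y rank R x' p.2 ∧ rank p.2 x' < rank p.2 p.1) := by
  classical
  simp [GSstep]

lemma GSavail_anti {R R' : Finset (V × V)} (h : R ⊆ R') (x : V) :
    GSavail G Y R' x ⊆ GSavail G Y R x := by
  intro y hy
  rw [GSavail, Finset.mem_filter] at hy ⊢
  exact ⟨hy.1, fun hm => hy.2.1 (h hm), hy.2.2⟩

lemma GSprop_persist {R : Finset (V × V)} {x y : V} (h : GSprop G X Y rank R x y)
    (hnot : (x, y) ∉ GSstep G X Y rank R) :
    GSprop G X Y rank (GSstep G X Y rank R) x y := by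
  obtain ⟨h1, h2, h3⟩ := h
  refine ⟨h1, ?_, ?_⟩
  · rw [GSavail, Finset.mem_filter] at h2 ⊢
    exact ⟨h2.1, hnot, h2.2.2⟩
  · intro z hz
    exact h3 z (GSavail_anti G Y (subset_GSstep G X Y rank R) x hz)

lemma GSbest {R : Finset (V × V)} {y : V} {c : ℕ}
    (h : ∃ x', GSprop G X Y rank R x' y ∧ rank y x' < c) :
    ∃ a, GSprop G X Y rank (GSstep G X Y rank R) a y ∧ rank y a < c := by
  classical
  obtain ⟨x', hx', hc⟩ := h
  set T := Finset.univ.filter (fun a => GSprop G X Y rank R a y) with hT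
  have hx'T : x' ∈ T := Finset.mem_filter.2 ⟨Finset.mem_univ _, hx'⟩
  obtain ⟨a, haT, hmin⟩ := T.exists_min_image (fun a => rank y a) ⟨x', hx'T⟩
  have haP : GSprop G X Y rank R a y := (Finset.mem_filter.1 haT).2
  have hanotR : (a, y) ∉ R := by
    have := haP.2.1
    rw [GSavail, Finset.mem_filter] at this
    exact this.2.1
  have hnotstep : (a, y) ∉ GSstep G X Y rank R := by
    intro hmem
    rcases (mem_GSstep G X Y rank).1 hmem with h1 | ⟨-, x'', hx'', hltr⟩
    · exact hanotR h1
    · have hltr' : rank y x'' < rank y a := hltr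
      have hge := hmin x'' (Finset.mem_filter.2 ⟨Finset.mem_univ _, hx''⟩)
      omega
  exact ⟨a, GSprop_persist G X Y rank haP hnotstep,
    lt_of_le_of_lt (hmin x' hx'T) hc⟩

/-- Invariant: every rejected suitor of `y` is dominated by a current proposer of `y`. -/
def GSInv (R : Finset (V × V)) : Prop :=
  ∀ p ∈ R, ∃ x', GSprop G X Y rank R x' p.2 ∧ rank p.2 x' < rank p.2 p.1

lemma GSInv_step {R : Finset (V × V)} (h : GSInv G X Y rank R) :
    GSInv G X Y rank (GSstep G X Y rank R) := by
  intro p hp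
  rcases (mem_GSstep G X Y rank).1 hp with h1 | ⟨-, hx⟩
  · exact GSbest G X Y rank (h p h1)
  · exact GSbest G X Y rank hx

lemma GS_exists_fixed : ∃ R, GSInv G X Y rank R ∧ GSstep G X Y rank R = R := by
  by_contra hcon
  push_neg at hcon
  set g : ℕ → Finset (V × V) := fun n => (GSstep G X Y rank)^[n] ∅ with hg
  have hinv : ∀ n, GSInv G X Y rank (g n) := by
    intro n
    induction n with
    | zero => intro p hp; exact absurd hp (Finset.notMem_empty p)
    | succ n ih =>
      have : g (n+1) = GSstep G X Y rank (g n) := Function.iterate_succ_apply' _ _ _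
      rw [this]
      exact GSInv_step G X Y rank ih
  have hcard : ∀ n, n ≤ (g n).card := by
    intro n
    induction n with
    | zero => omega
    | succ n ih =>
      have hstep : g (n+1) = GSstep G X Y rank (g n) := Function.iterate_succ_apply' _ _ _
      have hss : g n ⊂ g (n+1) := by
        rw [hstep]
        exact Finset.ssubset_iff_subset_ne.2
          ⟨subset_GSstep G X Y rank (g n), (hcon (g n) (hinv n)).symm⟩
      have := Finset.card_lt_card hss
      omega
  have h1 := hcard (Fintype.card (V × V) + 1)
  have h2 : (g (Fintype.card (V × V) + 1)).card ≤ Fintype.card (V × V) :=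
    Finset.card_le_univ _
  omega

/-- The matching induced by a set of proposals. -/
def GSmatch (R : Finset (V × V)) : G.Subgraph where
  verts := {v | ∃ w, GSprop G X Y rank R v w ∨ GSprop G X Y rank R w v}
  Adj a b := GSprop G X Y rank R a b ∨ GSprop G X Y rank R b a
  adj_sub := by
    rintro a b (h | h)
    · have := h.2.1
      rw [GSavail, Finset.mem_filter, mem_neighborFinset] at this
      exact this.1
    · have := h.2.1
      rw [GSavail, Finset.mem_filter, mem_neighborFinset] at this
      exact this.1.symm
  edge_vert := fun h => ⟨_, h⟩
  symm := ⟨fun a b h => Or.symm h⟩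

lemma GSprop_adj {R : Finset (V × V)} {x y : V} (h : GSprop G X Y rank R x y) :
    G.Adj x y := by
  have := h.2.1
  rw [GSavail, Finset.mem_filter, mem_neighborFinset] at this
  exact this.1

lemma GSprop_Y {R : Finset (V × V)} {x y : V} (h : GSprop G X Y rank R x y) : y ∈ Y := by
  have := h.2.1
  rw [GSavail, Finset.mem_filter] at this
  exact this.2.2

/-- At a fixed point, no proposer is dominated. -/
lemma GS_nodom {R : Finset (V × V)} (hfix : GSstep G X Y rank R = R)
    {x y x' : V} (hxy : GSprop G X Y rank R x y) (hx' : GSprop G X Y rank R x' y)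
    (hlt : rank y x' < rank y x) : False := by
  classical
  have hmem : (x, y) ∈ GSstep G X Y rank R :=
    (mem_GSstep G X Y rank).2 (Or.inr ⟨hxy, x', hx', hlt⟩)
  rw [hfix] at hmem
  have := hxy.2.1
  rw [GSavail, Finset.mem_filter] at this
  exact this.2.1 hmem

lemma GS_unique_proposer (hP : IsPrefInstance G rank) {R : Finset (V × V)}
    (hfix : GSstep G X Y rank R = R) {x₁ x₂ y : V}
    (h1 : GSprop G X Y rank R x₁ y) (h2 : GSprop G X Y rank R x₂ y) : x₁ = x₂ := by
  by_contra hne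
  have hN1 : x₁ ∈ G.neighborSet y := (G.mem_neighborSet y x₁).2 (GSprop_adj G X Y rank h1).symm
  have hN2 : x₂ ∈ G.neighborSet y := (G.mem_neighborSet y x₂).2 (GSprop_adj G X Y rank h2).symm
  have hrne : rank y x₁ ≠ rank y x₂ := fun h => hne (hP y hN1 hN2 h)
  rcases lt_or_gt_of_ne hrne with h | h
  · exact GS_nodom G X Y rank hfix h2 h1 h
  · exact GS_nodom G X Y rank hfix h1 h2 h

lemma GS_unique_proposee (hP : IsPrefInstance G rank) {R : Finset (V × V)} {x y₁ y₂ : V}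
    (h1 : GSprop G X Y rank R x y₁) (h2 : GSprop G X Y rank R x y₂) : y₁ = y₂ := by
  have hle1 : rank x y₁ ≤ rank x y₂ := h1.2.2 y₂ h2.2.1
  have hle2 : rank x y₂ ≤ rank x y₁ := h2.2.2 y₁ h1.2.1
  have hN1 : y₁ ∈ G.neighborSet x := (G.mem_neighborSet x y₁).2 (GSprop_adj G X Y rank h1)
  have hN2 : y₂ ∈ G.neighborSet x := (G.mem_neighborSet x y₂).2 (GSprop_adj G X Y rank h2)
  exact hP x hN1 hN2 (le_antisymm hle1 hle2)

lemma GS_noblock {R : Finset (V × V)} (hInv : GSInv G X Y rank R)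
    {x y : V} (hxX : x ∈ X) (hyY : y ∈ Y) (hG : G.Adj x y)
    (hxcond : ∀ w, (GSmatch G X Y rank R).Adj x w → rank x y < rank x w)
    (hycond : ∀ w, (GSmatch G X Y rank R).Adj y w → rank y x < rank y w) : False := by
  classical
  by_cases hR : (x, y) ∈ R
  · obtain ⟨x', hx', hlt⟩ := hInv (x, y) hR
    have hlt' : rank y x' < rank y x := hlt
    have hadj : (GSmatch G X Y rank R).Adj y x' := Or.inr hx'
    have := hycond x' hadj
    omega
  · have hyav : y ∈ GSavail G Y R x := by
      rw [GSavail, Finset.mem_filter, mem_neighborFinset]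
      exact ⟨hG, hR, hyY⟩
    obtain ⟨y', hy'mem, hmin⟩ :=
      (GSavail G Y R x).exists_min_image (fun z => rank x z) ⟨y, hyav⟩
    have hprop : GSprop G X Y rank R x y' := ⟨hxX, hy'mem, hmin⟩
    have hadj : (GSmatch G X Y rank R).Adj x y' := Or.inl hprop
    have h1 := hxcond y' hadj
    have h2 := hmin y hyav
    omega

lemma GS_exists_stable (hBip : _root_.IsBipartiteWith G X Y) (hP : IsPrefInstance G rank) :
    ∃ M : G.Subgraph, IsStableMatching rank M := by
  obtain ⟨R, hInv, hfix⟩ := GS_exists_fixed G X Y rank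
  refine ⟨GSmatch G X Y rank R, ?_, ?_⟩
  · -- matching
    rintro v ⟨w, hw⟩
    refine ⟨w, hw, ?_⟩
    intro u hu
    rcases hw with hw | hw <;> rcases hu with hu | hu
    · exact GS_unique_proposee G X Y rank hP hu hw
    · exact absurd (GSprop_Y G X Y rank hu)
        (Finset.disjoint_left.1 hBip.1 hw.1)
    · exact absurd (GSprop_Y G X Y rank hw)
        (Finset.disjoint_left.1 hBip.1 hu.1)
    · exact GS_unique_proposer G X Y rank hP hfix hu hw
  · -- stable
    rintro ⟨a, b, hG, hnM, ha, hb⟩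
    rcases hBip.2.2 hG with ⟨h1, h2⟩ | ⟨h1, h2⟩
    · exact GS_noblock G X Y rank hInv h1 h2 hG ha hb
    · exact GS_noblock G X Y rank hInv h2 h1 hG.symm hb ha

end GS

theorem stmt_5 {V : Type*} [Fintype V] [DecidableEq V] (G : SimpleGraph V)
    [DecidableRel G.Adj] (X Y : Finset V) (hBip : _root_.IsBipartiteWith G X Y)
    (rank : V → V → ℕ) (hP : IsPrefInstance G rank) :
    (∃ M : G.Subgraph, IsStableMatching rank M ∧ ∀ x ∈ X, Matched M x) ↔
      ∀ M : G.Subgraph, IsStableMatching rank M → ∀ x ∈ X, Matched M x := by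
  constructor
  · rintro ⟨M₀, hM₀, hsat⟩ M hM x hx
    exact mw_key hP hM₀ hM (hsat x hx)
  · intro h
    obtain ⟨M, hM⟩ := GS_exists_stable G X Y rank hBip hP
    exact ⟨M, hM, h M hM⟩
end

section
/- Let G = (X ∪ Y, E) be a finite connected bipartite graph with |X| = |Y| = n ≥ 1. Then every stable matching is perfect for every preference instance if and only if G is the complete bipartite graph K_{n,n}. -/
open SimpleGraph Finset

/-! ### Auxiliary machinery -/

/-- A matching represented as a finset of edges: every edge is in `G`, and edges
are pairwise vertex-disjoint. -/
def IsMatchF {V : Type*} (G : SimpleGraph V) (F : Finset (Sym2 V)) : Prop :=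
  (∀ e ∈ F, e ∈ G.edgeSet) ∧ ∀ e ∈ F, ∀ f ∈ F, e ≠ f → ∀ v : V, v ∈ e → v ∉ f

/-- A vertex matched by an edge-finset matching. -/
def MatchedF {V : Type*} (F : Finset (Sym2 V)) (v : V) : Prop :=
  ∃ w, s(v, w) ∈ F

lemma mem_edge_form {V : Type*} {e : Sym2 V} {a : V} (h : a ∈ e) : ∃ c, e = s(a, c) := by
  induction e with | _ x y => ?_
  rcases Sym2.mem_iff.1 h with rfl | rfl
  · exact ⟨y, rfl⟩
  · exact ⟨x, Sym2.eq_swap⟩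

lemma IsMatchF.edge_eq {V : Type*} {G : SimpleGraph V} {F : Finset (Sym2 V)}
    (hF : IsMatchF G F) {v w : V} (h : s(v, w) ∈ F) {e : Sym2 V} (he : e ∈ F)
    (hv : v ∈ e) : e = s(v, w) := by
  by_contra hne
  exact hF.2 e he _ h hne v hv (Sym2.mem_mk_left v w)

/-- The subgraph of `G` determined by an edge-finset matching. -/
def subOfF {V : Type*} (G : SimpleGraph V) (F : Finset (Sym2 V)) (hF : IsMatchF G F) :
    G.Subgraph where
  verts := {v | MatchedF F v}
  Adj v w := s(v, w) ∈ F
  adj_sub h := G.mem_edgeSet.1 (hF.1 _ h)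
  edge_vert h := ⟨_, h⟩
  symm := ⟨fun v w h => by
    show s(w, v) ∈ F
    have : s(w, v) = s(v, w) := Sym2.eq_swap
    rw [this]
    exact h⟩

lemma subOfF_isMatching {V : Type*} (G : SimpleGraph V) (F : Finset (Sym2 V))
    (hF : IsMatchF G F) : (subOfF G F hF).IsMatching := by
  rintro v ⟨w, hw⟩
  refine ⟨w, hw, fun w' hw' => ?_⟩
  have : s(v, w') = s(v, w) := hF.edge_eq hw hw' (Sym2.mem_mk_left v w')
  exact Sym2.congr_right.1 this

lemma bip_symm {V : Type*} {G : SimpleGraph V} {X Y : Finset V}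
    (h : _root_.IsBipartiteWith G X Y) : _root_.IsBipartiteWith G Y X :=
  ⟨h.1.symm, fun v => (h.2.1 v).symm, fun a b hab => ((h.2.2 hab).symm)⟩

open scoped Classical in
/-- In a bipartite graph, the number of matched vertices in `X` is at most the
number of matched vertices in `Y`. -/
lemma matched_card_le {V : Type*} [Fintype V] [DecidableEq V] {G : SimpleGraph V}
    {X Y : Finset V} (hBip : _root_.IsBipartiteWith G X Y) {M : G.Subgraph}
    (hM : M.IsMatching) :
    (X.filter (fun v => Matched M v)).card ≤ (Y.filter (fun v => Matched M v)).card := by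
  classical
  set f : V → V := fun u => if h : Matched M u then h.choose else u with hf
  apply Finset.card_le_card_of_injOn f
  · intro u hu
    rw [Finset.mem_coe, Finset.mem_filter] at hu
    obtain ⟨huX, huM⟩ := hu
    have hadj : M.Adj u (f u) := by
      simp only [hf, dif_pos huM]
      exact huM.choose_spec
    have hGadj : G.Adj u (f u) := M.adj_sub hadj
    rcases hBip.2.2 hGadj with ⟨_, h2⟩ | ⟨h1, _⟩
    · exact Finset.mem_filter.2 ⟨h2, ⟨u, hadj.symm⟩⟩
    · exact absurd huX (Finset.disjoint_left.1 hBip.1.symm h1)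
  · intro u hu u' hu' heq
    rw [Finset.mem_coe, Finset.mem_filter] at hu hu'
    have hadj : M.Adj u (f u) := by
      simp only [hf, dif_pos hu.2]; exact hu.2.choose_spec
    have hadj' : M.Adj u' (f u') := by
      simp only [hf, dif_pos hu'.2]; exact hu'.2.choose_spec
    rw [heq] at hadj
    have hv : f u' ∈ M.verts := M.edge_vert hadj.symm
    obtain ⟨w, _, huniq⟩ := hM hv
    exact (huniq u hadj.symm).trans (huniq u' hadj'.symm).symm

/-- Finding the key configuration: a path a–y–x–b with `a b` nonadjacent. -/
lemma find_config {V : Type*} {G : SimpleGraph V} {X Y : Finset V}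
    (hBip : _root_.IsBipartiteWith G X Y) :
    ∀ (n : ℕ) (a b : V) (W : G.Walk a b), W.length ≤ n → a ∈ X → b ∈ Y → ¬ G.Adj a b →
    ∃ a' y x b', G.Adj a' y ∧ G.Adj y x ∧ G.Adj x b' ∧ ¬ G.Adj a' b' ∧
      a' ∈ X ∧ b' ∈ Y := by
  intro n
  induction n with
  | zero =>
    intro a b W hlen haX hbY _
    have : a = b := W.eq_of_length_eq_zero (Nat.le_zero.1 hlen)
    exact absurd (this ▸ haX) (Finset.disjoint_left.1 hBip.1 · hbY)
  | succ n ih =>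
    intro a b W hlen haX hbY hnadj
    cases W with
    | nil => exact absurd haX (Finset.disjoint_left.1 hBip.1 · hbY)
    | @cons _ p1 _ h1 W1 =>
      have hp1Y : p1 ∈ Y := by
        rcases hBip.2.2 h1 with ⟨_, h⟩ | ⟨h, _⟩
        · exact h
        · exact absurd haX (Finset.disjoint_left.1 hBip.1 · h)
      cases W1 with
      | nil => exact absurd h1 hnadj
      | @cons _ p2 _ h2 W2 =>
        have hp2X : p2 ∈ X := by
          rcases hBip.2.2 h2 with ⟨h, _⟩ | ⟨_, h⟩
          · exact absurd h (Finset.disjoint_left.1 hBip.1 · hp1Y)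
          · exact h
        by_cases hadj : G.Adj p2 b
        · exact ⟨a, p1, p2, b, h1, h2, hadj, hnadj, haX, hbY⟩
        · have hlen2 : W2.length ≤ n := by
            simp only [SimpleGraph.Walk.length_cons] at hlen
            omega
          exact ih p2 b W2 hlen2 hp2X hbY hadj

/-- From a non-complete connected balanced bipartite graph, produce a matching
(as an edge finset) with an unmatched vertex whose unmatched set is independent. -/
lemma exists_bad_matching {V : Type*} [Fintype V] [DecidableEq V] (G : SimpleGraph V)
    {X Y : Finset V} (hBip : _root_.IsBipartiteWith G X Y) (hconn : G.Connected)
    {a b : V} (haX : a ∈ X) (hbY : b ∈ Y) (hnadj : ¬ G.Adj a b) :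
    ∃ F : Finset (Sym2 V), IsMatchF G F ∧ (∃ v, ¬ MatchedF F v) ∧
      ∀ u v, G.Adj u v → MatchedF F u ∨ MatchedF F v := by
  classical
  -- get the configuration
  obtain ⟨a, y, x, b, hay, hyx, hxb, hab, haX, hbY⟩ :=
    find_config hBip ((hconn a b).some.length) a b (hconn a b).some le_rfl haX hbY hnadj
  have hax : a ≠ x := fun h => hab (h ▸ hxb)
  have hyb : y ≠ b := fun h => hab (h ▸ hay)
  have haneb : a ≠ b := fun h => (Finset.disjoint_left.1 hBip.1 (h ▸ haX)) hbY
  have hay' : a ≠ y := hay.ne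
  have hyx' : y ≠ x := hyx.ne
  have hxb' : x ≠ b := hxb.ne
  -- the starting two-edge matching
  set F0 : Finset (Sym2 V) := {s(a, y), s(x, b)} with hF0
  have hF0ne : s(a, y) ≠ s(x, b) := by
    intro h
    rw [Sym2.eq_iff] at h
    rcases h with ⟨h, _⟩ | ⟨h, _⟩
    · exact hax h
    · exact haneb h
  have hmemF0 : ∀ v : V, ∀ e ∈ F0, v ∈ e → (v = a ∨ v = y) ∧ e = s(a,y) ∨ (v = x ∨ v = b) ∧ e = s(x,b) := by
    intro v e he hv
    rcases Finset.mem_insert.1 he with rfl | he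
    · left; exact ⟨by simpa using hv, rfl⟩
    · obtain rfl : e = s(x, b) := Finset.mem_singleton.1 he
      right; exact ⟨by simpa using hv, rfl⟩
  have hF0M : IsMatchF G F0 := by
    constructor
    · intro e he
      rcases Finset.mem_insert.1 he with rfl | he
      · exact hay
      · rw [Finset.mem_singleton.1 he]; exact hxb
    · intro e he f hf hef v hve hvf
      rcases hmemF0 v e he hve with ⟨hv1, rfl⟩ | ⟨hv1, rfl⟩ <;>
        rcases hmemF0 v f hf hvf with ⟨hv2, rfl⟩ | ⟨hv2, rfl⟩
      · exact hef rfl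
      · rcases hv1 with rfl | rfl <;> rcases hv2 with h | h
        · exact hax h
        · exact haneb h
        · exact hyx' h
        · exact hyb h
      · rcases hv1 with rfl | rfl <;> rcases hv2 with h | h
        · exact hax h.symm
        · exact hyx' h.symm
        · exact haneb h.symm
        · exact hyb h.symm
      · exact hef rfl
  -- maximal-cardinality matching containing F0
  set S : Set (Finset (Sym2 V)) := {F | IsMatchF G F ∧ F0 ⊆ F} with hS
  have hSfin : S.Finite := Set.Finite.subset (Set.finite_univ) (Set.subset_univ S)
  obtain ⟨F, hFS, hFmax⟩ := Set.Finite.exists_maximalFor (fun F => F.card) S hSfin ⟨F0, hF0M, le_refl F0⟩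
  obtain ⟨hFM, hF0F⟩ := hFS
  -- maximality gives: unmatched vertices are independent
  have hindep : ∀ u v, G.Adj u v → MatchedF F u ∨ MatchedF F v := by
    intro u v huv
    by_contra hcon
    push_neg at hcon
    obtain ⟨hu, hv⟩ := hcon
    have hnew : s(u, v) ∉ F := fun h => hu ⟨v, h⟩
    have hF' : IsMatchF G (insert s(u, v) F) := by
      constructor
      · intro e he
        rcases Finset.mem_insert.1 he with rfl | he
        · exact huv
        · exact hFM.1 e he
      · intro e he f hf hef w hwe hwf
        rcases Finset.mem_insert.1 he with he' | he'
        · rcases Finset.mem_insert.1 hf with hf' | hf'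
          · exact hef (he'.trans hf'.symm)
          · subst he'
            rcases Sym2.mem_iff.1 hwe with h | h
            · subst h
              obtain ⟨c, hc⟩ := mem_edge_form hwf
              exact hu ⟨c, hc ▸ hf'⟩
            · subst h
              obtain ⟨c, hc⟩ := mem_edge_form hwf
              exact hv ⟨c, hc ▸ hf'⟩
        · rcases Finset.mem_insert.1 hf with hf' | hf'
          · subst hf'
            rcases Sym2.mem_iff.1 hwf with h | h
            · subst h
              obtain ⟨c, hc⟩ := mem_edge_form hwe
              exact hu ⟨c, hc ▸ he'⟩
            · subst h
              obtain ⟨c, hc⟩ := mem_edge_form hwe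
              exact hv ⟨c, hc ▸ he'⟩
          · exact hFM.2 e he' f hf' hef w hwe hwf
    have hmem : insert s(u, v) F ∈ S := ⟨hF', hF0F.trans (Finset.subset_insert _ _)⟩
    have hcard : (insert s(u, v) F).card ≤ F.card := hFmax hmem (Finset.card_le_card (Finset.subset_insert _ _))
    rw [Finset.card_insert_of_notMem hnew] at hcard
    omega
  by_cases hperf : ∃ v, ¬ MatchedF F v
  · exact ⟨F, hFM, hperf, hindep⟩
  · -- F is perfect: swap edges to expose a and b
    push_neg at hperf
    have hayF : s(a, y) ∈ F := hF0F (Finset.mem_insert_self _ _)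
    have hxbF : s(x, b) ∈ F := hF0F (by simp [hF0])
    set F' : Finset (Sym2 V) := insert s(x, y) ((F.erase s(a, y)).erase s(x, b)) with hF'
    have hxyF' : s(x, y) ∈ F' := Finset.mem_insert_self _ _
    -- characterize membership
    have hmemF' : ∀ e ∈ F', e = s(x, y) ∨ (e ∈ F ∧ e ≠ s(a, y) ∧ e ≠ s(x, b)) := by
      intro e he
      rcases Finset.mem_insert.1 he with rfl | he
      · exact Or.inl rfl
      · right
        have h1 := Finset.mem_of_mem_erase he
        exact ⟨Finset.mem_of_mem_erase h1, Finset.ne_of_mem_erase h1, Finset.ne_of_mem_erase he⟩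
    have hF'M : IsMatchF G F' := by
      constructor
      · intro e he
        rcases hmemF' e he with rfl | ⟨heF, _, _⟩
        · exact hyx.symm
        · exact hFM.1 e heF
      · intro e he f hf hef v hve hvf
        rcases hmemF' e he with rfl | ⟨heF, hea, heb⟩ <;>
          rcases hmemF' f hf with rfl | ⟨hfF, hfa, hfb⟩
        · exact hef rfl
        · -- v ∈ s(x,y), v ∈ f ∈ F, f ≠ ay, f ≠ xb
          have hyaF : s(y, a) ∈ F := by
            have : s(y, a) = s(a, y) := Sym2.eq_swap
            rw [this]; exact hayF
          rcases Sym2.mem_iff.1 hve with rfl | rfl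
          · exact hfb (hFM.edge_eq hxbF hfF hvf)
          · exact hfa ((hFM.edge_eq hyaF hfF hvf).trans Sym2.eq_swap)
        · have hyaF : s(y, a) ∈ F := by
            have : s(y, a) = s(a, y) := Sym2.eq_swap
            rw [this]; exact hayF
          rcases Sym2.mem_iff.1 hvf with rfl | rfl
          · exact heb (hFM.edge_eq hxbF heF hve)
          · exact hea ((hFM.edge_eq hyaF heF hve).trans Sym2.eq_swap)
        · exact hFM.2 e heF f hfF hef v hve hvf
    -- a is unmatched in F'
    have haun : ¬ MatchedF F' a := by
      rintro ⟨w, hw⟩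
      rcases hmemF' _ hw with h | ⟨hwF, hwa, _⟩
      · rw [Sym2.eq_iff] at h
        rcases h with ⟨h, _⟩ | ⟨h, _⟩
        · exact hax h
        · exact hay' h
      · exact hwa (hFM.edge_eq hayF hwF (Sym2.mem_mk_left a w))
    have hbun : ¬ MatchedF F' b := by
      rintro ⟨w, hw⟩
      rcases hmemF' _ hw with h | ⟨hwF, _, hwb⟩
      · rw [Sym2.eq_iff] at h
        rcases h with ⟨h, _⟩ | ⟨h, _⟩
        · exact hxb' h.symm
        · exact hyb h.symm
      · have hbxF : s(b, x) ∈ F := by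
          have : s(b, x) = s(x, b) := Sym2.eq_swap
          rw [this]; exact hxbF
        exact hwb ((hFM.edge_eq hbxF hwF (Sym2.mem_mk_left b w)).trans Sym2.eq_swap)
    -- every other vertex is matched in F'
    have hmatched : ∀ v, v ≠ a → v ≠ b → MatchedF F' v := by
      intro v hva hvb
      obtain ⟨w, hw⟩ := hperf v
      by_cases h1 : s(v, w) = s(a, y)
      · rw [Sym2.eq_iff] at h1
        rcases h1 with ⟨rfl, rfl⟩ | ⟨rfl, rfl⟩
        · exact absurd rfl hva
        · exact ⟨x, Sym2.eq_swap ▸ hxyF'⟩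
      by_cases h2 : s(v, w) = s(x, b)
      · rw [Sym2.eq_iff] at h2
        rcases h2 with ⟨rfl, rfl⟩ | ⟨rfl, rfl⟩
        · exact ⟨y, hxyF'⟩
        · exact absurd rfl hvb
      · exact ⟨w, Finset.mem_insert_of_mem
          (Finset.mem_erase.2 ⟨h2, Finset.mem_erase.2 ⟨h1, hw⟩⟩)⟩
    refine ⟨F', hF'M, ⟨a, haun⟩, ?_⟩
    intro u v huv
    by_contra hcon
    push_neg at hcon
    obtain ⟨hu, hv⟩ := hcon
    have hu' : u = a ∨ u = b := by
      by_contra h; push_neg at h; exact hu (hmatched u h.1 h.2)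
    have hv' : v = a ∨ v = b := by
      by_contra h; push_neg at h; exact hv (hmatched v h.1 h.2)
    rcases hu' with rfl | rfl <;> rcases hv' with rfl | rfl
    · exact G.irrefl huv
    · exact hab huv
    · exact hab huv.symm
    · exact G.irrefl huv

theorem stmt_7 {V : Type*} [Fintype V] [DecidableEq V] (G : SimpleGraph V)
    [DecidableRel G.Adj] (X Y : Finset V) (n : ℕ) (hn : 1 ≤ n)
    (hBip : _root_.IsBipartiteWith G X Y) (hconn : G.Connected)
    (hXcard : X.card = n) (hYcard : Y.card = n) :
    (∀ rank : V → V → ℕ, IsPrefInstance G rank →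
        ∀ M : G.Subgraph, IsStableMatching rank M → ∀ v : V, Matched M v) ↔
      ∀ a ∈ X, ∀ b ∈ Y, G.Adj a b := by
  classical
  constructor
  · -- every stable matching perfect ⇒ complete bipartite
    intro hstable
    by_contra hcon
    push_neg at hcon
    obtain ⟨a, haX, b, hbY, hnadj⟩ := hcon
    obtain ⟨F, hFM, ⟨v0, hv0⟩, hindep⟩ := exists_bad_matching G hBip hconn haX hbY hnadj
    set M : G.Subgraph := subOfF G F hFM with hM
    set ι : V ≃ Fin (Fintype.card V) := Fintype.equivFin V with hι
    set rank : V → V → ℕ := fun v w => if s(v, w) ∈ F then 0 else (ι w : ℕ) + 1 with hrank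
    have hpref : IsPrefInstance G rank := by
      intro v w1 hw1 w2 hw2 heq
      simp only [hrank] at heq
      by_cases h1 : s(v, w1) ∈ F <;> by_cases h2 : s(v, w2) ∈ F
      · exact Sym2.congr_right.1 ((hFM.edge_eq h2 h1 (Sym2.mem_mk_left v w1)))
      · rw [if_pos h1, if_neg h2] at heq; omega
      · rw [if_neg h1, if_pos h2] at heq; omega
      · rw [if_neg h1, if_neg h2] at heq
        have : ι w1 = ι w2 := Fin.ext (by omega)
        exact ι.injective this
    have hstab : IsStableMatching rank M := by
      refine ⟨subOfF_isMatching G F hFM, ?_⟩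
      rintro ⟨x, y, hxy, hnM, hx, hy⟩
      have hxun : ¬ MatchedF F x := by
        rintro ⟨w, hw⟩
        have := hx w hw
        simp only [hrank, if_pos hw] at this
        omega
      have hyun : ¬ MatchedF F y := by
        rintro ⟨w, hw⟩
        have := hy w hw
        simp only [hrank, if_pos hw] at this
        omega
      rcases hindep x y hxy with h | h
      · exact hxun h
      · exact hyun h
    obtain ⟨w, hw⟩ := hstable rank hpref M hstab v0
    exact hv0 ⟨w, hw⟩
  · -- complete bipartite ⇒ every stable matching perfect
    intro hcomp rank hpref M hstab v
    by_contra hv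
    obtain ⟨hmatch, hblock⟩ := hstab
    -- find an unmatched vertex on the other side
    have key : ∀ (X' Y' : Finset V), _root_.IsBipartiteWith G X' Y' → X'.card = Y'.card →
        v ∈ X' → ∃ w ∈ Y', ¬ Matched M w := by
      intro X' Y' hBip' hcard hvX
      by_contra h
      push_neg at h
      have hYall : Y'.filter (fun u => Matched M u) = Y' :=
        Finset.filter_eq_self.2 h
      have h1 : (X'.filter (fun u => Matched M u)).card < X'.card := by
        apply Finset.card_lt_card
        refine ⟨Finset.filter_subset _ _, fun hsub => ?_⟩
        have := Finset.mem_filter.1 (hsub hvX)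
        exact hv this.2
      have h2 := matched_card_le (bip_symm hBip') hmatch
      rw [hYall] at h2
      omega
    have hvXY := hBip.2.1 v
    rcases hvXY with hvX | hvY
    · obtain ⟨w, hwY, hwun⟩ := key X Y hBip (by omega) hvX
      apply hblock
      refine ⟨v, w, hcomp v hvX w hwY, fun hM => hv ⟨w, hM⟩, ?_, ?_⟩
      · intro u hu; exact absurd ⟨u, hu⟩ hv
      · intro u hu; exact absurd ⟨u, hu⟩ hwun
    · obtain ⟨w, hwX, hwun⟩ := key Y X (bip_symm hBip) (by omega) hvY
      apply hblock
      refine ⟨w, v, hcomp w hwX v hvY, fun hM => hv ⟨w, hM.symm⟩, ?_, ?_⟩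
      · intro u hu; exact absurd ⟨u, hu⟩ hwun
      · intro u hu; exact absurd ⟨u, hu⟩ hv
end

section
/- Let G = (X ∪ Y, E) be a finite bipartite graph with |X| = |Y|. Then every stable matching is perfect for every preference instance if and only if every connected component of G is a biclique (a complete bipartite graph on its two sides) with equally many vertices on each side. -/
open SimpleGraph Finset

section Aux

variable {V : Type*} {G : SimpleGraph V}

/-- A matching presented as a partial partner function. -/
def IsMatchFun (G : SimpleGraph V) (f : V → Option V) : Prop :=
  ∀ ⦃v w : V⦄, f v = some w → G.Adj v w ∧ f w = some v

def mSub (f : V → Option V) (hf : IsMatchFun G f) : G.Subgraph where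
  verts := {v | (f v).isSome}
  Adj a b := f a = some b
  adj_sub h := (hf h).1
  edge_vert h := by simp [Set.mem_setOf_eq, h]
  symm := ⟨fun a b h => (hf h).2⟩

lemma mSub_isMatching (f : V → Option V) (hf : IsMatchFun G f) :
    (mSub f hf).IsMatching := by
  intro v hv
  obtain ⟨w, hw⟩ := Option.isSome_iff_exists.mp hv
  refine ⟨w, hw, fun y hy => ?_⟩
  have h1 : f v = some y := hy
  rw [hw] at h1
  exact (Option.some_injective V h1).symm

lemma matched_mSub (f : V → Option V) (hf : IsMatchFun G f) (v : V) :
    Matched (mSub f hf) v ↔ (f v).isSome := by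
  constructor
  · rintro ⟨w, hw⟩
    have : f v = some w := hw
    simp [this]
  · intro h; obtain ⟨w, hw⟩ := Option.isSome_iff_exists.mp h; exact ⟨w, hw⟩

variable [Fintype V] [DecidableEq V]

lemma stable_of_maximal
    (H : ∀ rank : V → V → ℕ, IsPrefInstance G rank →
        ∀ M : G.Subgraph, IsStableMatching rank M → ∀ v : V, Matched M v)
    (f : V → Option V) (hf : IsMatchFun G f)
    (hmax : ∀ x y, G.Adj x y → (f x).isSome ∨ (f y).isSome) :
    ∀ v, (f v).isSome := by
  classical
  set e := Fintype.equivFin V with he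
  set rank : V → V → ℕ := fun v u => if f v = some u then 0 else (e u).val + 1 with hrank
  have hpref : IsPrefInstance G rank := by
    intro v u1 hu1 u2 hu2 hr
    simp only [hrank] at hr
    by_cases h1 : f v = some u1 <;> by_cases h2 : f v = some u2
    · rw [h1] at h2; exact Option.some_injective V h2
    · simp [if_pos h1, if_neg h2] at hr
    · simp [if_neg h1, if_pos h2] at hr
    · simp [if_neg h1, if_neg h2] at hr
      exact e.injective (Fin.val_injective hr)
  have hstab : IsStableMatching rank (mSub f hf) := by
    refine ⟨mSub_isMatching f hf, ?_⟩
    rintro ⟨x, y, hxy, hnM, hx, hy⟩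
    rcases hmax x y hxy with h | h
    · obtain ⟨w, hw⟩ := Option.isSome_iff_exists.mp h
      have hMw : (mSub f hf).Adj x w := hw
      have := hx w hMw
      have hr0 : rank x w = 0 := by simp [hrank, hw]
      omega
    · obtain ⟨w, hw⟩ := Option.isSome_iff_exists.mp h
      have hMw : (mSub f hf).Adj y w := hw
      have := hy w hMw
      have hr0 : rank y w = 0 := by simp [hrank, hw]
      omega
  intro v
  exact (matched_mSub f hf v).mp (H rank hpref (mSub f hf) hstab v)

end Aux
section Aux2

variable {V : Type*} [Fintype V] [DecidableEq V] {G : SimpleGraph V} [DecidableRel G.Adj]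

lemma exists_maximal_matchfun (G : SimpleGraph V) [DecidableRel G.Adj] :
    ∃ f : V → Option V, IsMatchFun G f ∧ ∀ x y, G.Adj x y → (f x).isSome ∨ (f y).isSome := by
  classical
  suffices h : ∀ s : Finset V, ∃ f : V → Option V, IsMatchFun G f ∧
      (∀ v, (f v).isSome → v ∈ s) ∧
      (∀ x ∈ s, ∀ y ∈ s, G.Adj x y → (f x).isSome ∨ (f y).isSome) by
    obtain ⟨f, h1, _, h3⟩ := h Finset.univ
    exact ⟨f, h1, fun x y hxy => h3 x (Finset.mem_univ x) y (Finset.mem_univ y) hxy⟩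
  intro s
  induction s using Finset.strongInduction with
  | _ s ih =>
    by_cases hedge : ∃ x ∈ s, ∃ y ∈ s, G.Adj x y
    · obtain ⟨x, hxs, y, hys, hxy⟩ := hedge
      have hxny : x ≠ y := hxy.ne
      set s' := (s.erase x).erase y with hs'
      have hsub : s' ⊂ s := by
        refine Finset.ssubset_iff_of_subset (fun v hv => Finset.mem_of_mem_erase (Finset.mem_of_mem_erase hv)) |>.mpr ?_
        exact ⟨x, hxs, by simp [hs', hxny]⟩
      obtain ⟨f', hf', hsupp', hmax'⟩ := ih s' hsub
      have hxs' : x ∉ s' := by simp [hs']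
      have hys' : y ∉ s' := by simp [hs']
      refine ⟨fun v => if v = x then some y else if v = y then some x else f' v, ?_, ?_, ?_⟩
      · intro v w hv
        by_cases h1 : v = x
        · simp only [h1, if_pos rfl] at hv
          obtain rfl : w = y := (Option.some_injective V hv).symm
          exact ⟨h1 ▸ hxy, by simp [hxny.symm, h1]⟩
        · by_cases h2 : v = y
          · simp only [if_neg h1, if_pos h2] at hv
            obtain rfl : w = x := (Option.some_injective V hv).symm
            exact ⟨h2 ▸ hxy.symm, by simp [h2]⟩
          · simp only [if_neg h1, if_neg h2] at hv
            have := hf' hv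
            have hws : w ∈ s' := hsupp' w (by simp [this.2])
            have hwx : w ≠ x := fun h => hxs' (h ▸ hws)
            have hwy : w ≠ y := fun h => hys' (h ▸ hws)
            exact ⟨this.1, by simp [hwx, hwy, this.2]⟩
      · intro v hv
        by_cases h1 : v = x
        · exact h1 ▸ hxs
        · by_cases h2 : v = y
          · exact h2 ▸ hys
          · simp only [if_neg h1, if_neg h2] at hv
            exact (Finset.mem_of_mem_erase (Finset.mem_of_mem_erase (hsupp' v hv)))
      · intro a ha b hb hab
        by_cases h1 : a = x; · left; simp [h1]
        by_cases h2 : a = y; · left; simp [h2, hxny.symm]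
        by_cases h3 : b = x; · right; simp [h3]
        by_cases h4 : b = y; · right; simp [h4, hxny.symm]
        have ha' : a ∈ s' := by simp [hs', h1, h2, ha]
        have hb' : b ∈ s' := by simp [hs', h3, h4, hb]
        rcases hmax' a ha' b hb' hab with h | h
        · left; simpa [h1, h2] using h
        · right; simpa [h3, h4] using h
    · push_neg at hedge
      refine ⟨fun _ => none, ?_, ?_, ?_⟩
      · intro v w hv; simp at hv
      · intro v hv; simp at hv
      · intro a ha b hb hab; exact absurd hab (hedge a ha b hb)

/-- A perfect matching as a total involution. -/
def IsPM (G : SimpleGraph V) (g : V → V) : Prop :=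
  ∀ v, G.Adj v (g v) ∧ g (g v) = v

variable (H : ∀ rank : V → V → ℕ, IsPrefInstance G rank →
        ∀ M : G.Subgraph, IsStableMatching rank M → ∀ v : V, Matched M v)

include H in
lemma exists_pm : ∃ g : V → V, IsPM G g := by
  obtain ⟨f, hf, hmax⟩ := exists_maximal_matchfun G
  have hall := stable_of_maximal H f hf hmax
  refine ⟨fun v => (f v).get (hall v), fun v => ?_⟩
  have h1 : f v = some ((f v).get (hall v)) := (Option.some_get (hall v)).symm
  obtain ⟨ha, hb⟩ := hf h1
  refine ⟨ha, ?_⟩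
  set w := (f v).get (hall v) with hwdef
  show (f w).get (hall w) = v
  simp [hb]

include H in
/-- Key rigidity lemma: a matching missing exactly two vertices forces an edge. -/
lemma adj_of_missing_two (f : V → Option V) (hf : IsMatchFun G f) {p q : V} (hpq : p ≠ q)
    (hnone : ∀ v, f v = none ↔ v = p ∨ v = q) : G.Adj p q := by
  by_contra hnadj
  have hmax : ∀ x y, G.Adj x y → (f x).isSome ∨ (f y).isSome := by
    intro x y hxy
    by_contra h'
    push_neg at h'
    obtain ⟨h1, h2⟩ := h'
    have hx := (hnone x).mp (Option.not_isSome_iff_eq_none.mp h1)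
    have hy := (hnone y).mp (Option.not_isSome_iff_eq_none.mp h2)
    rcases hx with rfl | rfl <;> rcases hy with rfl | rfl
    · exact hxy.ne rfl
    · exact hnadj hxy
    · exact hnadj hxy.symm
    · exact hxy.ne rfl
  have := stable_of_maximal H f hf hmax p
  rw [Option.isSome_iff_exists] at this
  obtain ⟨w, hw⟩ := this
  rw [(hnone p).mpr (Or.inl rfl)] at hw
  exact nomatch hw

end Aux2
section Aux3

variable {V : Type*} [Fintype V] [DecidableEq V] {G : SimpleGraph V} [DecidableRel G.Adj]

def swapPM (g : V → V) (y z : V) : V → V := fun v =>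
  if v = y then z else if v = z then y else if v = g y then g z else
    if v = g z then g y else g v

variable (H : ∀ rank : V → V → ℕ, IsPrefInstance G rank →
        ∀ M : G.Subgraph, IsStableMatching rank M → ∀ v : V, Matched M v)

include H in
lemma swap_adj {g : V → V} (hg : IsPM G g) {y z : V} (hyz : G.Adj y z) :
    G.Adj (g y) (g z) := by
  classical
  by_cases h : g y = z
  · have hz : g z = y := by rw [← h, (hg y).2]
    rw [h, hz]; exact hyz.symm
  · -- distinctness facts
    have hyy : g y ≠ y := fun he => G.irrefl (he ▸ (hg y).1)
    have hzz : g z ≠ z := fun he => G.irrefl (he ▸ (hg z).1)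
    have hzy : g z ≠ y := fun he => h (by rw [← he, (hg z).2])
    have hne : y ≠ z := hyz.ne
    have hgyz : g y ≠ g z := fun he => hne (by rw [← (hg y).2, he, (hg z).2])
    set f : V → Option V := fun v =>
      if v = y then some z else if v = z then some y else if v = g y then none else
        if v = g z then none else some (g v) with hfdef
    have hf : IsMatchFun G f := by
      intro v w hv
      simp only [hfdef] at hv ⊢
      by_cases h1 : v = y
      · rw [if_pos h1] at hv
        obtain rfl : w = z := (Option.some_injective V hv).symm
        refine ⟨h1 ▸ hyz, ?_⟩
        rw [if_neg hne.symm, if_pos rfl, h1]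
      · rw [if_neg h1] at hv
        by_cases h2 : v = z
        · rw [if_pos h2] at hv
          obtain rfl : w = y := (Option.some_injective V hv).symm
          refine ⟨h2 ▸ hyz.symm, ?_⟩
          rw [if_pos rfl, h2]
        · rw [if_neg h2] at hv
          by_cases h3 : v = g y
          · rw [if_pos h3] at hv; exact nomatch hv
          · rw [if_neg h3] at hv
            by_cases h4 : v = g z
            · rw [if_pos h4] at hv; exact nomatch hv
            · rw [if_neg h4] at hv
              obtain rfl : w = g v := (Option.some_injective V hv).symm
              have e1 : g v ≠ y := fun he => h3 (by rw [← he, (hg v).2])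
              have e2 : g v ≠ z := fun he => h4 (by rw [← he, (hg v).2])
              have e3 : g v ≠ g y := fun he => h1 (by rw [← (hg v).2, he, (hg y).2])
              have e4 : g v ≠ g z := fun he => h2 (by rw [← (hg v).2, he, (hg z).2])
              refine ⟨(hg v).1, ?_⟩
              rw [if_neg e1, if_neg e2, if_neg e3, if_neg e4, (hg v).2]
    have hnone : ∀ v, f v = none ↔ v = g y ∨ v = g z := by
      intro v
      simp only [hfdef]
      constructor
      · intro hv
        by_cases h1 : v = y
        · rw [if_pos h1] at hv; exact nomatch hv
        · rw [if_neg h1] at hv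
          by_cases h2 : v = z
          · rw [if_pos h2] at hv; exact nomatch hv
          · rw [if_neg h2] at hv
            by_cases h3 : v = g y
            · exact Or.inl h3
            · rw [if_neg h3] at hv
              by_cases h4 : v = g z
              · exact Or.inr h4
              · rw [if_neg h4] at hv; exact nomatch hv
      · rintro (rfl | rfl)
        · rw [if_neg hyy, if_neg h, if_pos rfl]
        · rw [if_neg hzy, if_neg hzz, if_neg hgyz.symm, if_pos rfl]
    exact adj_of_missing_two H f hf hgyz hnone

lemma swapPM_isPM {g : V → V} (hg : IsPM G g) {y z : V} (hyz : G.Adj y z)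
    (hadj : G.Adj (g y) (g z)) : IsPM G (swapPM g y z) := by
  classical
  have hne : y ≠ z := hyz.ne
  have hyy : g y ≠ y := fun he => G.irrefl (he ▸ (hg y).1)
  have hzz : g z ≠ z := fun he => G.irrefl (he ▸ (hg z).1)
  have hgyz : g y ≠ g z := fun he => hne (by rw [← (hg y).2, he, (hg z).2])
  intro v
  unfold swapPM
  by_cases h1 : v = y
  · subst h1
    rw [if_pos rfl]
    refine ⟨hyz, ?_⟩
    rw [if_neg hne.symm, if_pos rfl]
  · rw [if_neg h1]
    by_cases h2 : v = z
    · subst h2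
      rw [if_pos rfl]
      exact ⟨hyz.symm, by rw [if_pos rfl]⟩
    · rw [if_neg h2]
      by_cases h3 : v = g y
      · subst h3
        rw [if_pos rfl]
        refine ⟨hadj, ?_⟩
        have hzy : g z ≠ y := fun he => h2 (by rw [← he, (hg z).2])
        have hgzz : g z ≠ z := hzz
        rw [if_neg hzy, if_neg hgzz, if_neg hgyz.symm, if_pos rfl]
      · rw [if_neg h3]
        by_cases h4 : v = g z
        · subst h4
          rw [if_pos rfl]
          refine ⟨hadj.symm, ?_⟩
          have hgyz' : g y ≠ z := fun he => h1 (by rw [← he, (hg y).2])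
          rw [if_neg hyy, if_neg hgyz', if_pos rfl]
        · rw [if_neg h4]
          have e1 : g v ≠ y := fun he => h3 (by rw [← he, (hg v).2])
          have e2 : g v ≠ z := fun he => h4 (by rw [← he, (hg v).2])
          have e3 : g v ≠ g y := fun he => h1 (by rw [← (hg v).2, he, (hg y).2])
          have e4 : g v ≠ g z := fun he => h2 (by rw [← (hg v).2, he, (hg z).2])
          refine ⟨(hg v).1, ?_⟩
          rw [if_neg e1, if_neg e2, if_neg e3, if_neg e4, (hg v).2]

end Aux3
section Aux4

variable {V : Type*} [Fintype V] [DecidableEq V] {G : SimpleGraph V} [DecidableRel G.Adj]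
  {X Y : Finset V}

omit [Fintype V] [DecidableRel G.Adj] in
lemma adj_memY (hBip : _root_.IsBipartiteWith G X Y) {a b : V} (hab : G.Adj a b) (ha : a ∈ X) :
    b ∈ Y := by
  rcases hBip.2.2 hab with ⟨_, hb⟩ | ⟨ha', _⟩
  · exact hb
  · exact absurd ha' (Finset.disjoint_left.mp hBip.1 ha)

omit [Fintype V] [DecidableRel G.Adj] in
lemma adj_memX (hBip : _root_.IsBipartiteWith G X Y) {a b : V} (hab : G.Adj a b) (ha : a ∈ Y) :
    b ∈ X := by
  rcases hBip.2.2 hab with ⟨ha', _⟩ | ⟨_, hb⟩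
  · exact absurd ha' (Finset.disjoint_right.mp hBip.1 ha)
  · exact hb

omit [Fintype V] [DecidableRel G.Adj] in
lemma not_memXY (hBip : _root_.IsBipartiteWith G X Y) {a b : V} (ha : a ∈ X) (hb : b ∈ Y) :
    a ≠ b := fun h => Finset.disjoint_left.mp hBip.1 ha (h ▸ hb)

variable (H : ∀ rank : V → V → ℕ, IsPrefInstance G rank →
        ∀ M : G.Subgraph, IsStableMatching rank M → ∀ v : V, Matched M v)

include H in
lemma main_adj (hBip : _root_.IsBipartiteWith G X Y) {x y z w : V}
    (hx : x ∈ X) (hy : y ∈ Y) (hz : z ∈ X) (hw : w ∈ Y)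
    (hxz : x ≠ z) (hyw : y ≠ w)
    (a1 : G.Adj x y) (a2 : G.Adj y z) (a3 : G.Adj z w) : G.Adj x w := by
  classical
  obtain ⟨g0, hg0⟩ := exists_pm H
  have hA0 : G.Adj (g0 y) (g0 z) := swap_adj H hg0 a2
  set g1 := swapPM g0 y z with hg1def
  have hg1 : IsPM G g1 := swapPM_isPM hg0 a2 hA0
  have g1y : g1 y = z := by
    simp [hg1def, swapPM]
  -- u := g1 x
  set u := g1 x with hudef
  have huY : u ∈ Y := adj_memY hBip (hg1 x).1 hx
  have huy : u ≠ y := by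
    by_cases hx1 : x = g0 y
    · have : u = g0 z := by
        rw [hudef, hg1def]
        unfold swapPM
        rw [if_neg (not_memXY hBip hx hy), if_neg hxz, if_pos hx1]
      rw [this]
      intro he
      apply hxz
      rw [hx1, ← he, (hg0 z).2]
    · have hx2 : x ≠ g0 z := not_memXY hBip hx (adj_memY hBip (hg0 z).1 hz)
      have : u = g0 x := by
        rw [hudef, hg1def]
        unfold swapPM
        rw [if_neg (not_memXY hBip hx hy), if_neg hxz, if_neg hx1, if_neg hx2]
      rw [this]
      intro he
      exact hx1 (by rw [← he, (hg0 x).2])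
  have hA1 : G.Adj u z := by
    have := swap_adj H hg1 a1
    rwa [g1y, ← hudef] at this
  set g2 := swapPM g1 x y with hg2def
  have hg2 : IsPM G g2 := swapPM_isPM hg1 a1 (by rwa [g1y, ← hudef])
  have g2y : g2 y = x := by
    rw [hg2def]; unfold swapPM
    rw [if_neg (not_memXY hBip hx hy).symm, if_pos rfl]
  have g2z : g2 z = u := by
    rw [hg2def]; unfold swapPM
    rw [if_neg hxz.symm, if_neg (not_memXY hBip hz hy).symm.symm,
      if_neg (not_memXY hBip hz huY), if_pos (by rw [g1y])]
  by_cases hwu : w = u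
  · have : G.Adj x u := (hg1 x).1
    rwa [← hwu] at this
  · have g2w : g2 w = g1 w := by
      rw [hg2def]; unfold swapPM
      rw [if_neg (not_memXY hBip hx hw).symm, if_neg (Ne.symm hyw),
        if_neg hwu, if_neg (by rw [g1y]; exact (not_memXY hBip hz hw).symm)]
    have hg1wX : g1 w ∈ X := adj_memX hBip (hg1 w).1 hw
    have hA2 : G.Adj u (g1 w) := by
      have := swap_adj H hg2 a3
      rwa [g2z, g2w] at this
    set g3 := swapPM g2 z w with hg3def
    have hg3 : IsPM G g3 := swapPM_isPM hg2 a3 (by rwa [g2z, g2w])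
    have g3z : g3 z = w := by
      simp [hg3def, swapPM]
    have g3y : g3 y = x := by
      rw [hg3def]; unfold swapPM
      rw [if_neg (not_memXY hBip hz hy).symm, if_neg hyw,
        if_neg (by rw [g2z]; exact huy.symm), if_neg (by rw [g2w]; exact (not_memXY hBip hg1wX hy).symm), g2y]
    have := swap_adj H hg3 a2
    rwa [g3y, g3z] at this

end Aux4
section Aux5

variable {V : Type*} [Fintype V] [DecidableEq V] {G : SimpleGraph V} [DecidableRel G.Adj]
  {X Y : Finset V}

variable (H : ∀ rank : V → V → ℕ, IsPrefInstance G rank →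
        ∀ M : G.Subgraph, IsStableMatching rank M → ∀ v : V, Matched M v)

include H in
lemma adj_of_walk (hBip : _root_.IsBipartiteWith G X Y) :
    ∀ n : ℕ, ∀ a b : V, ∀ W : G.Walk a b, W.length ≤ n → a ∈ X → b ∈ Y → G.Adj a b := by
  intro n
  induction n with
  | zero =>
    intro a b W hlen ha hb
    cases W with
    | nil => exact absurd rfl (not_memXY hBip ha hb)
    | cons h W' => simp [SimpleGraph.Walk.length_cons] at hlen
  | succ n ih =>
    intro a b W hlen ha hb
    cases W with
    | nil => exact absurd rfl (not_memXY hBip ha hb)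
    | @cons _ p1 _ h W' =>
      cases W' with
      | nil => exact h
      | @cons _ p2 _ h2 W'' =>
        simp only [SimpleGraph.Walk.length_cons] at hlen
        have hp1 : p1 ∈ Y := adj_memY hBip h ha
        have hp2 : p2 ∈ X := adj_memX hBip h2 hp1
        by_cases hap2 : a = p2
        · subst hap2
          exact ih a b W'' (by omega) ha hb
        · cases W'' with
          | nil => exact absurd rfl (not_memXY hBip hp2 hb)
          | @cons _ p3 _ h3 W''' =>
            simp only [SimpleGraph.Walk.length_cons] at hlen
            have hp3 : p3 ∈ Y := adj_memY hBip h3 hp2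
            by_cases hp13 : p1 = p3
            · subst hp13
              exact ih a b (SimpleGraph.Walk.cons h W''')
                (by simp only [SimpleGraph.Walk.length_cons]; omega) ha hb
            · have hadj := main_adj H hBip ha hp1 hp2 hp3 hap2 hp13 h h2 h3
              exact ih a b (SimpleGraph.Walk.cons hadj W''')
                (by simp only [SimpleGraph.Walk.length_cons]; omega) ha hb

include H in
lemma forward_complete (hBip : _root_.IsBipartiteWith G X Y) :
    ∀ a ∈ X, ∀ b ∈ Y, G.Reachable a b → G.Adj a b := by
  intro a ha b hb hr
  obtain ⟨W⟩ := hr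
  exact adj_of_walk H hBip W.length a b W le_rfl ha hb

include H in
lemma forward_balanced (hBip : _root_.IsBipartiteWith G X Y) [DecidableRel G.Reachable] (v : V) :
    (X.filter fun a => G.Reachable a v).card = (Y.filter fun b => G.Reachable b v).card := by
  classical
  obtain ⟨g, hg⟩ := exists_pm H
  refine Finset.card_bij' (fun a _ => g a) (fun b _ => g b) ?_ ?_ ?_ ?_
  · intro a ha
    rw [Finset.mem_filter] at ha ⊢
    exact ⟨adj_memY hBip (hg a).1 ha.1, ((hg a).1.symm.reachable).trans ha.2⟩
  · intro b hb
    rw [Finset.mem_filter] at hb ⊢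
    exact ⟨adj_memX hBip (hg b).1 hb.1, ((hg b).1.symm.reachable).trans hb.2⟩
  · intro a _; exact (hg a).2
  · intro b _; exact (hg b).2

omit [Fintype V] [DecidableRel G.Adj] in
lemma backward_aux [DecidableRel G.Reachable] {M : G.Subgraph} (hM : M.IsMatching)
    (A B : Finset V) (v : V)
    (hAB : ∀ ⦃a b⦄, G.Adj a b → a ∈ A → b ∈ B)
    (hBA : ∀ ⦃a b⦄, G.Adj a b → a ∈ B → b ∈ A)
    (hcards : (A.filter fun a => G.Reachable a v).card =
      (B.filter fun b => G.Reachable b v).card)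
    (hvA : v ∈ A) (hv : ¬ Matched M v) :
    ∃ u ∈ B, G.Reachable u v ∧ ¬ Matched M u := by
  classical
  set P : V → V := fun u => if h : u ∈ M.verts then (hM h).choose else u with hP
  have hP1 : ∀ {u w}, M.Adj u w → P u = w := by
    intro u w huw
    have hu : u ∈ M.verts := M.edge_vert huw
    rw [hP]
    simp only [dif_pos hu]
    exact ((hM hu).choose_spec.2 w huw).symm
  have hPadj : ∀ {u}, Matched M u → M.Adj u (P u) := by
    rintro u ⟨w, hw⟩
    rw [hP1 hw]
    exact hw
  set SA := A.filter fun a => G.Reachable a v with hSA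
  set SB := B.filter fun b => G.Reachable b v with hSB
  have key : (SA.filter fun u => Matched M u).card = (SB.filter fun u => Matched M u).card := by
    refine Finset.card_bij' (fun a _ => P a) (fun b _ => P b) ?_ ?_ ?_ ?_
    · intro a ha
      rw [Finset.mem_filter, hSA, Finset.mem_filter] at ha
      obtain ⟨⟨haA, hra⟩, hma⟩ := ha
      have hMadj := hPadj hma
      have hGadj : G.Adj a (P a) := M.adj_sub hMadj
      rw [Finset.mem_filter, hSB, Finset.mem_filter]
      exact ⟨⟨hAB hGadj haA, hGadj.symm.reachable.trans hra⟩, ⟨a, hMadj.symm⟩⟩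
    · intro b hb
      rw [Finset.mem_filter, hSB, Finset.mem_filter] at hb
      obtain ⟨⟨hbB, hrb⟩, hmb⟩ := hb
      have hMadj := hPadj hmb
      have hGadj : G.Adj b (P b) := M.adj_sub hMadj
      rw [Finset.mem_filter, hSA, Finset.mem_filter]
      exact ⟨⟨hBA hGadj hbB, hGadj.symm.reachable.trans hrb⟩, ⟨b, hMadj.symm⟩⟩
    · intro a ha
      rw [Finset.mem_filter] at ha
      exact hP1 (hPadj ha.2).symm
    · intro b hb
      rw [Finset.mem_filter] at hb
      exact hP1 (hPadj hb.2).symm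
  have hvSA : v ∈ SA := by
    rw [hSA, Finset.mem_filter]; exact ⟨hvA, SimpleGraph.Reachable.refl v⟩
  have hsub : (SA.filter fun u => Matched M u) ⊆ SA.erase v := by
    intro u hu
    rw [Finset.mem_filter] at hu
    rw [Finset.mem_erase]
    exact ⟨fun he => hv (he ▸ hu.2), hu.1⟩
  have hlt : (SB.filter fun u => Matched M u).card < SB.card := by
    calc (SB.filter fun u => Matched M u).card
        = (SA.filter fun u => Matched M u).card := key.symm
      _ ≤ (SA.erase v).card := Finset.card_le_card hsub
      _ < SA.card := Finset.card_erase_lt_of_mem hvSA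
      _ = SB.card := hcards
  have hss : (SB.filter fun u => Matched M u) ⊂ SB := by
    refine Finset.ssubset_iff_subset_ne.mpr ⟨Finset.filter_subset _ _, ?_⟩
    intro he
    rw [he] at hlt
    exact lt_irrefl _ hlt
  obtain ⟨u, huSB, hu⟩ := Finset.exists_of_ssubset hss
  rw [hSB, Finset.mem_filter] at huSB
  refine ⟨u, huSB.1, huSB.2, fun hm => hu ?_⟩
  rw [Finset.mem_filter]
  exact ⟨by rw [hSB, Finset.mem_filter]; exact huSB, hm⟩

end Aux5


theorem stmt_8 {V : Type*} [Fintype V] [DecidableEq V] (G : SimpleGraph V)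
    [DecidableRel G.Adj] [DecidableRel G.Reachable] (X Y : Finset V)
    (hBip : _root_.IsBipartiteWith G X Y) (hcard : X.card = Y.card) :
    (∀ rank : V → V → ℕ, IsPrefInstance G rank →
        ∀ M : G.Subgraph, IsStableMatching rank M → ∀ v : V, Matched M v) ↔
      ((∀ a ∈ X, ∀ b ∈ Y, G.Reachable a b → G.Adj a b) ∧
        ∀ v : V, (X.filter fun a => G.Reachable a v).card =
          (Y.filter fun b => G.Reachable b v).card) := by
  constructor
  · intro H
    exact ⟨forward_complete H hBip, forward_balanced H hBip⟩
  · rintro ⟨hcompl, hbal⟩ rank hrank M ⟨hM, hblock⟩ v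
    by_contra hv
    have hYX : ∀ ⦃a b : V⦄, G.Adj a b → a ∈ Y → b ∈ X := fun a b hab ha => adj_memX hBip hab ha
    have hXY : ∀ ⦃a b : V⦄, G.Adj a b → a ∈ X → b ∈ Y := fun a b hab ha => adj_memY hBip hab ha
    have block : ∀ u, G.Adj v u → ¬ Matched M u → False := by
      intro u hadj hu
      apply hblock
      refine ⟨v, u, hadj, fun hMvu => hv ⟨u, hMvu⟩, ?_, ?_⟩
      · intro w hw; exact absurd ⟨w, hw⟩ hv
      · intro w hw; exact absurd ⟨w, hw⟩ hu
    rcases hBip.2.1 v with hvX | hvY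
    · obtain ⟨u, huY, hru, humatch⟩ := backward_aux hM X Y v hXY hYX (hbal v) hvX hv
      exact block u (hcompl v hvX u huY hru.symm) humatch
    · obtain ⟨u, huX, hru, humatch⟩ := backward_aux hM Y X v hYX hXY (hbal v).symm hvY hv
      exact block u (hcompl u huX v hvY hru).symm humatch
end

section
/- Let X = A₁ ∪ … ∪ Aₙ (possibly overlapping classes, with Aᵢ \ ⋃_{j≠i} Aⱼ nonempty for each i) and let Y be partitioned into disjoint sets B₁, …, Bₙ. In the compatibility-wise complete bipartite graph where x ∈ X is adjacent to y ∈ Bᵢ iff x ∈ Aᵢ, every stable matching is X-saturating for all preference instances if and only if |Bᵢ| ≥ |Aᵢ| for all 1 ≤ i ≤ n. -/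
open SimpleGraph Finset

lemma aux_exists_injOn {V : Type*} [DecidableEq V] (s t : Finset V) (h : s.card ≤ t.card) :
    ∃ f : V → V, Set.InjOn f ↑s ∧ ∀ x ∈ s, f x ∈ t := by
  obtain ⟨t', ht'sub, ht'card⟩ := t.exists_subset_card_eq h
  have e := Finset.equivOfCardEq ht'card.symm
  classical
  refine ⟨fun v => if hv : v ∈ s then (e ⟨v, hv⟩ : V) else v, ?_, ?_⟩
  · intro a ha b hb hab
    simp only [Finset.mem_coe] at ha hb
    simp only [dif_pos ha, dif_pos hb] at hab
    have := e.injective (Subtype.coe_injective hab)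
    exact Subtype.mk_eq_mk.mp this
  · intro x hx
    simp only [dif_pos hx]
    exact ht'sub (e ⟨x, hx⟩).2

theorem stmt_9 {V : Type*} [Fintype V] [DecidableEq V] (G : SimpleGraph V)
    [DecidableRel G.Adj] (X Y : Finset V) (hdisj : Disjoint X Y)
    (n : ℕ) (A B : Fin n → Finset V)
    (hX : X = Finset.univ.biUnion A)
    (hY : Y = Finset.univ.biUnion B)
    (hBdisj : ∀ i j : Fin n, i ≠ j → Disjoint (B i) (B j))
    (hexcl : ∀ i : Fin n, ∃ x ∈ A i, ∀ j : Fin n, j ≠ i → x ∉ A j)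
    (hAdj : ∀ a b : V, G.Adj a b ↔ ∃ i : Fin n,
      (a ∈ A i ∧ b ∈ B i) ∨ (b ∈ A i ∧ a ∈ B i)) :
    (∀ rank : V → V → ℕ, IsPrefInstance G rank →
        ∀ M : G.Subgraph, IsStableMatching rank M → ∀ x ∈ X, Matched M x) ↔
      ∀ i : Fin n, (A i).card ≤ (B i).card := by
  classical
  have hAX : ∀ j : Fin n, ∀ v ∈ A j, v ∈ X := by
    intro j v hv; rw [hX]; exact Finset.mem_biUnion.mpr ⟨j, Finset.mem_univ j, hv⟩
  have hBY : ∀ j : Fin n, ∀ v ∈ B j, v ∈ Y := by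
    intro j v hv; rw [hY]; exact Finset.mem_biUnion.mpr ⟨j, Finset.mem_univ j, hv⟩
  constructor
  · -- saturation → cardinality condition
    intro hsat i
    by_contra hlt
    push_neg at hlt
    obtain ⟨xs, hxsA, hxsexcl⟩ := hexcl i
    have hxsX : xs ∈ X := hAX i xs hxsA
    -- injection from B i into A i minus xs
    have hcard : (B i).card ≤ ((A i).erase xs).card := by
      rw [Finset.card_erase_of_mem hxsA]; omega
    obtain ⟨f, hfinj, hfmem⟩ := aux_exists_injOn (B i) ((A i).erase xs) hcard
    have hfA : ∀ y ∈ B i, f y ∈ A i := fun y hy => Finset.mem_of_mem_erase (hfmem y hy)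
    have hfne : ∀ y ∈ B i, f y ≠ xs := fun y hy => Finset.ne_of_mem_erase (hfmem y hy)
    have hfadj : ∀ y ∈ B i, G.Adj (f y) y := by
      intro y hy; rw [hAdj]; exact ⟨i, Or.inl ⟨hfA y hy, hy⟩⟩
    -- neighbors of xs are all in B i
    have hnbr : ∀ z : V, G.Adj xs z → z ∈ B i := by
      intro z hz
      rw [hAdj] at hz
      obtain ⟨j, ⟨h1, h2⟩ | ⟨h1, h2⟩⟩ := hz
      · by_cases hji : j = i
        · exact hji ▸ h2
        · exact absurd h1 (hxsexcl j hji)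
      · exact absurd (hBY j xs h2) (Finset.disjoint_left.mp hdisj hxsX)
    -- the property of candidate edge sets
    set P : Finset (Sym2 V) → Prop := fun s =>
      (∀ e ∈ s, e ∈ G.edgeSet) ∧
      (∀ e ∈ s, ∀ e' ∈ s, ∀ v : V, v ∈ e → v ∈ e' → e = e') ∧
      (∀ e ∈ s, xs ∉ e) ∧
      (∀ y ∈ B i, s(f y, y) ∈ s) with hP
    -- base edge set
    have hbase : P ((B i).image fun y => s(f y, y)) := by
      refine ⟨?_, ?_, ?_, ?_⟩
      · intro e he
        obtain ⟨y, hy, rfl⟩ := Finset.mem_image.mp he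
        exact (hfadj y hy)
      · intro e he e' he' v hv hv'
        obtain ⟨y, hy, rfl⟩ := Finset.mem_image.mp he
        obtain ⟨y', hy', rfl⟩ := Finset.mem_image.mp he'
        rw [Sym2.mem_iff] at hv hv'
        have hyy' : y = y' := by
          have hXv : ∀ u ∈ A i, ∀ w ∈ B i, u ≠ w := by
            intro u hu w hw huw
            exact Finset.disjoint_left.mp hdisj (hAX i u hu) (huw ▸ hBY i w hw)
          rcases hv with h | h <;> rcases hv' with h' | h'
          · exact hfinj hy hy' (h.symm.trans h')
          · exact absurd (h.symm.trans h') (hXv (f y) (hfA y hy) y' hy')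
          · exact absurd (h.symm.trans h').symm (hXv (f y') (hfA y' hy') y hy)
          · exact h.symm.trans h'
        rw [hyy']
      · intro e he hxe
        obtain ⟨y, hy, rfl⟩ := Finset.mem_image.mp he
        rw [Sym2.mem_iff] at hxe
        rcases hxe with h | h
        · exact hfne y hy h.symm
        · exact Finset.disjoint_left.mp hdisj hxsX (h ▸ hBY i y hy)
      · intro y hy; exact Finset.mem_image_of_mem _ hy
    -- pick a maximum-cardinality edge set satisfying P
    have hne : (Finset.univ.filter P).Nonempty :=
      ⟨_, Finset.mem_filter.mpr ⟨Finset.mem_univ _, hbase⟩⟩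
    obtain ⟨E, hEmem, hEmax⟩ := Finset.exists_max_image (Finset.univ.filter P) Finset.card hne
    have hPE : P E := (Finset.mem_filter.mp hEmem).2
    obtain ⟨hE1, hE2, hE3, hE4⟩ := hPE
    -- a helper: being in an edge of E means being matched
    have hmem_matched : ∀ (e : Sym2 V), e ∈ E → ∀ v : V, v ∈ e → ∃ w, s(v, w) ∈ E := by
      intro e he
      induction e with
      | _ a b =>
        intro v hv
        rw [Sym2.mem_iff] at hv
        rcases hv with rfl | rfl
        · exact ⟨b, he⟩
        · exact ⟨a, Sym2.eq_swap ▸ he⟩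
    -- build the subgraph
    set M : G.Subgraph :=
      { verts := {v | ∃ w, s(v, w) ∈ E}
        Adj := fun u v => s(u, v) ∈ E
        adj_sub := fun h => (SimpleGraph.mem_edgeSet G).mp (hE1 _ h)
        edge_vert := fun h => ⟨_, h⟩
        symm := ⟨fun u v h => by change s(v, u) ∈ E; rwa [Sym2.eq_swap]⟩ } with hM
    have hMAdj : ∀ u v : V, M.Adj u v ↔ s(u, v) ∈ E := fun u v => Iff.rfl
    have hMuniq : ∀ v w w' : V, M.Adj v w → M.Adj v w' → w = w' := by
      intro v w w' h h'
      have := hE2 _ h _ h' v (Sym2.mem_mk_left v w) (Sym2.mem_mk_left v w')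
      exact Sym2.congr_right.mp this
    have hMmatch : M.IsMatching := by
      intro v hv
      obtain ⟨w, hw⟩ := hv
      exact ⟨w, hw, fun w' hw' => hMuniq v w' w hw' hw⟩
    -- rank function
    set enc : V → ℕ := fun v => ((Fintype.equivFin V) v : ℕ) with henc
    set rank : V → V → ℕ := fun v w => if s(v, w) ∈ E then 0 else enc w + 1 with hrank
    have hrank_matched : ∀ v w : V, M.Adj v w → rank v w = 0 := by
      intro v w h; simp only [hrank, if_pos (show s(v, w) ∈ E from h)]
    have hpref : IsPrefInstance G rank := by
      intro v w₁ hw₁ w₂ hw₂ heq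
      simp only [hrank] at heq
      by_cases h1 : s(v, w₁) ∈ E <;> by_cases h2 : s(v, w₂) ∈ E
      · exact hMuniq v w₁ w₂ h1 h2
      · rw [if_pos h1, if_neg h2] at heq; omega
      · rw [if_neg h1, if_pos h2] at heq; omega
      · rw [if_neg h1, if_neg h2] at heq
        have : enc w₁ = enc w₂ := by omega
        exact (Fintype.equivFin V).injective (Fin.val_injective this)
    -- xs is unmatched
    have hxs_unm : ∀ w : V, ¬ M.Adj xs w := by
      intro w hw
      exact hE3 _ hw (Sym2.mem_mk_left xs w)
    -- all of B i is matched (to f)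
    have hBm : ∀ y ∈ B i, M.Adj y (f y) := by
      intro y hy
      show s(y, f y) ∈ E
      rw [Sym2.eq_swap]
      exact hE4 y hy
    -- stability
    have hstab : IsStableMatching rank M := by
      refine ⟨hMmatch, ?_⟩
      rintro ⟨x, y, hadj, hnM, hx, hy⟩
      -- both x and y must be unmatched
      have hxu : ∀ w, ¬ M.Adj x w := by
        intro w hw
        have := hx w hw
        rw [hrank_matched x w hw] at this
        omega
      have hyu : ∀ w, ¬ M.Adj y w := by
        intro w hw
        have := hy w hw
        rw [hrank_matched y w hw] at this
        omega
      by_cases hxxs : x = xs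
      · subst hxxs
        have hyB : y ∈ B i := hnbr y hadj
        exact hyu (f y) (hBm y hyB)
      by_cases hyxs : y = xs
      · subst hyxs
        have hxB : x ∈ B i := hnbr x hadj.symm
        exact hxu (f x) (hBm x hxB)
      -- otherwise insert the edge, contradicting maximality
      have hnew : s(x, y) ∉ E := hnM
      have hPins : P (insert s(x, y) E) := by
        refine ⟨?_, ?_, ?_, ?_⟩
        · intro e he
          rcases Finset.mem_insert.mp he with rfl | he
          · exact (SimpleGraph.mem_edgeSet G).mpr hadj
          · exact hE1 _ he
        · intro e he e' he' v hv hv'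
          have key : ∀ v : V, v ∈ (s(x, y) : Sym2 V) → ∀ e ∈ E, v ∉ e := by
            intro v hv e he hve
            obtain ⟨w, hw⟩ := hmem_matched e he v hve
            rw [Sym2.mem_iff] at hv
            rcases hv with rfl | rfl
            · exact hxu w hw
            · exact hyu w hw
          rcases Finset.mem_insert.mp he with rfl | he <;>
            rcases Finset.mem_insert.mp he' with rfl | he'
          · rfl
          · exact absurd hv' (key v hv _ he')
          · exact absurd hv (key v hv' _ he)
          · exact hE2 _ he _ he' v hv hv'
        · intro e he hxe
          rcases Finset.mem_insert.mp he with rfl | he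
          · rw [Sym2.mem_iff] at hxe
            rcases hxe with rfl | rfl
            · exact hxxs rfl
            · exact hyxs rfl
          · exact hE3 _ he hxe
        · intro z hz; exact Finset.mem_insert_of_mem (hE4 z hz)
      have hle := hEmax _ (Finset.mem_filter.mpr ⟨Finset.mem_univ _, hPins⟩)
      rw [Finset.card_insert_of_notMem hnew] at hle
      omega
    obtain ⟨w, hw⟩ := hsat rank hpref M hstab xs hxsX
    exact hxs_unm w hw
  · -- cardinality condition → saturation
    intro hcard rank hpref M hstabM x hxX
    obtain ⟨hM, hstab⟩ := hstabM
    by_contra hunm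
    rw [Matched] at hunm
    push_neg at hunm
    obtain ⟨i, _, hxA⟩ := Finset.mem_biUnion.mp (hX ▸ hxX)
    -- every y ∈ B i is matched
    have hBm : ∀ y ∈ B i, ∃ w, M.Adj y w := by
      intro y hy
      by_contra hyu
      push_neg at hyu
      refine hstab ⟨x, y, ?_, hunm y, fun w hw => absurd hw (hunm w), fun w hw => absurd hw (hyu w)⟩
      rw [hAdj]; exact ⟨i, Or.inl ⟨hxA, hy⟩⟩
    -- partner function
    set p : V → V := fun y => if h : ∃ w, M.Adj y w then h.choose else y with hp
    have hpadj : ∀ y ∈ B i, M.Adj y (p y) := by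
      intro y hy
      simp only [hp, dif_pos (hBm y hy)]
      exact (hBm y hy).choose_spec
    have hpmem : ∀ y ∈ B i, p y ∈ (A i).erase x := by
      intro y hy
      have hadj := M.adj_sub (hpadj y hy)
      rw [hAdj] at hadj
      have hpyA : p y ∈ A i := by
        obtain ⟨j, ⟨h1, h2⟩ | ⟨h1, h2⟩⟩ := hadj
        · exact absurd (hBY i y hy) (Finset.disjoint_left.mp hdisj (hAX j y h1))
        · by_cases hji : j = i
          · exact hji ▸ h1
          · exact absurd hy (Finset.disjoint_left.mp (hBdisj j i hji) h2)
      refine Finset.mem_erase.mpr ⟨?_, hpyA⟩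
      intro hpx
      exact hunm y (hpx ▸ (hpadj y hy).symm)
    have hpinj : Set.InjOn p ↑(B i) := by
      intro y₁ hy₁ y₂ hy₂ hpeq
      have h1 : M.Adj (p y₁) y₁ := (hpadj y₁ hy₁).symm
      have h2 : M.Adj (p y₁) y₂ := hpeq ▸ (hpadj y₂ hy₂).symm
      exact ((hM (M.edge_vert h1)).unique h1 h2 : y₁ = y₂)
    have h1 : (B i).card ≤ ((A i).erase x).card :=
      Finset.card_le_card_of_injOn p hpmem hpinj
    rw [Finset.card_erase_of_mem hxA] at h1
    have h2 := hcard i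
    have h3 : 1 ≤ (A i).card := Finset.card_pos.mpr ⟨x, hxA⟩
    omega
end

section
/- Let G = (X ∪ Y, E) be a finite connected bipartite graph with |X| = |Y| = n, and suppose that every x ∈ X and every y ∈ Y is matched in every stable matching under every preference instance. Then for every x ∈ X with a neighbor v ∈ Y of degree n, x is adjacent to all of Y. -/
open SimpleGraph Finset

section Aux

variable {V : Type*} [Fintype V] [DecidableEq V] {G : SimpleGraph V}

lemma matched_iff_mem {M : G.Subgraph} (hM : M.IsMatching) (u : V) :
    Matched M u ↔ u ∈ M.verts := by
  constructor
  · rintro ⟨w, hw⟩; exact hw.fst_mem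
  · intro hu; obtain ⟨w, hw, -⟩ := hM hu; exact ⟨w, hw⟩

lemma sup_edge_matching {M : G.Subgraph} (hM : M.IsMatching) {a b : V} (hab : G.Adj a b)
    (ha : a ∉ M.verts) (hb : b ∉ M.verts) :
    (M ⊔ G.subgraphOfAdj hab).IsMatching := by
  apply hM.sup (SimpleGraph.Subgraph.IsMatching.subgraphOfAdj hab)
  rw [hM.support_eq_verts,
    (SimpleGraph.Subgraph.IsMatching.subgraphOfAdj hab).support_eq_verts]
  simp only [SimpleGraph.subgraphOfAdj_verts]
  rw [Set.disjoint_right]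
  rintro u (rfl | rfl) <;> simp_all

lemma exists_maximal_matching (M : G.Subgraph) (hM : M.IsMatching) :
    ∃ M' : G.Subgraph, M ≤ M' ∧ M'.IsMatching ∧
      ∀ a b, G.Adj a b → a ∈ M'.verts ∨ b ∈ M'.verts := by
  classical
  suffices h : ∀ k (M : G.Subgraph), M.IsMatching → Fintype.card V - M.verts.ncard ≤ k →
      ∃ M' : G.Subgraph, M ≤ M' ∧ M'.IsMatching ∧
        ∀ a b, G.Adj a b → a ∈ M'.verts ∨ b ∈ M'.verts by
    exact h (Fintype.card V) M hM (Nat.sub_le _ _)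
  intro k
  induction k with
  | zero =>
    intro M hM hle
    have huniv : M.verts = Set.univ := by
      apply Set.eq_of_subset_of_ncard_le (Set.subset_univ _)
      · have h2 : (Set.univ : Set V).ncard = Fintype.card V := by
          rw [Set.ncard_univ, Nat.card_eq_fintype_card]
        omega
    exact ⟨M, le_refl _, hM, fun a b _ => Or.inl (huniv ▸ Set.mem_univ a)⟩
  | succ k ih =>
    intro M hM hle
    by_cases hmax : ∀ a b, G.Adj a b → a ∈ M.verts ∨ b ∈ M.verts
    · exact ⟨M, le_refl _, hM, hmax⟩
    · push_neg at hmax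
      obtain ⟨a, b, hab, ha, hb⟩ := hmax
      set M' := M ⊔ G.subgraphOfAdj hab with hM'def
      have hM' : M'.IsMatching := sup_edge_matching hM hab ha hb
      have hverts : M'.verts = insert a (insert b M.verts) := by
        rw [hM'def, SimpleGraph.Subgraph.verts_sup, SimpleGraph.subgraphOfAdj_verts]
        ext u; simp [or_comm, or_assoc]
      have hcard : M'.verts.ncard = M.verts.ncard + 2 := by
        rw [hverts, Set.ncard_insert_of_notMem (by simp [hab.ne, ha]) (Set.toFinite _),
          Set.ncard_insert_of_notMem hb (Set.toFinite _)]
      obtain ⟨M'', h1, h2, h3⟩ := ih M' hM' (by omega)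
      exact ⟨M'', le_trans le_sup_left h1, h2, h3⟩

lemma maximal_matching_spanning [DecidableRel G.Adj]
    (hmatched : ∀ rank : V → V → ℕ, IsPrefInstance G rank →
      ∀ M : G.Subgraph, IsStableMatching rank M → ∀ v : V, Matched M v)
    (M : G.Subgraph) (hM : M.IsMatching)
    (hmax : ∀ a b, G.Adj a b → a ∈ M.verts ∨ b ∈ M.verts) :
    ∀ u : V, u ∈ M.verts := by
  classical
  set rank : V → V → ℕ := fun u w => if M.Adj u w then 0 else (Fintype.equivFin V w).val + 1
    with hrank
  have hpref : IsPrefInstance G rank := by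
    intro u w₁ h₁ w₂ h₂ heq
    simp only [hrank] at heq
    split_ifs at heq with hA1 hA2 hA2
    · obtain ⟨w, hw, huniq⟩ := hM hA1.fst_mem
      rw [huniq _ hA1, huniq _ hA2]
    all_goals first
      | exact (Nat.succ_ne_zero _ heq).elim
      | exact (Nat.succ_ne_zero _ heq.symm).elim
      | exact (Fintype.equivFin V).injective (Fin.val_injective (Nat.succ_injective heq))
  have hstable : IsStableMatching rank M := by
    refine ⟨hM, ?_⟩
    rintro ⟨p, q, hpq, hnpq, hp, hq⟩
    rcases hmax p q hpq with h | h
    · obtain ⟨w, hw, -⟩ := hM h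
      have := hp w hw
      simp only [hrank, if_pos hw] at this
      omega
    · obtain ⟨w, hw, -⟩ := hM h
      have := hq w hw
      simp only [hrank, if_pos hw] at this
      omega
  intro u
  exact ((matched_iff_mem hM u).mp (hmatched rank hpref M hstable u))

end Aux

theorem stmt_13 {V : Type*} [Fintype V] [DecidableEq V] (G : SimpleGraph V)
    [DecidableRel G.Adj] (X Y : Finset V) (n : ℕ)
    (hBip : _root_.IsBipartiteWith G X Y) (hconn : G.Connected)
    (hXcard : X.card = n) (hYcard : Y.card = n)
    (hmatched : ∀ rank : V → V → ℕ, IsPrefInstance G rank →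
      ∀ M : G.Subgraph, IsStableMatching rank M → ∀ v : V, Matched M v) :
    ∀ x ∈ X, ∀ v : V, G.Adj x v → v ∈ Y → G.degree v = n →
      ∀ y ∈ Y, G.Adj x y := by
  classical
  obtain ⟨hdisj, hcover, hsides⟩ := hBip
  intro x hx v hxv hvY hdeg y hy
  by_contra hxy
  -- v is adjacent to all of X
  have hvnX : v ∉ X := Finset.disjoint_right.mp hdisj hvY
  have hNv : G.neighborFinset v = X := by
    apply Finset.eq_of_subset_of_card_le
    · intro u hu
      rw [SimpleGraph.mem_neighborFinset] at hu
      rcases hsides hu with ⟨h1, _⟩ | ⟨_, h2⟩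
      · exact absurd h1 hvnX
      · exact h2
    · rw [hXcard, ← hdeg]; rfl
  have hvall : ∀ a ∈ X, G.Adj v a := fun a ha => by
    rw [← hNv] at ha; exact (SimpleGraph.mem_neighborFinset G v a).mp ha
  -- a maximal matching M containing the edge (x, v)
  obtain ⟨M, hle, hM, hmax⟩ :=
    exists_maximal_matching (G.subgraphOfAdj hxv)
      (SimpleGraph.Subgraph.IsMatching.subgraphOfAdj hxv)
  have hspan : ∀ u : V, u ∈ M.verts := maximal_matching_spanning hmatched M hM hmax
  have hMxv : M.Adj x v := hle.2 (by simp)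
  -- unique partners
  have hxpart : ∀ w, M.Adj x w → w = v := fun w hw => by
    obtain ⟨p, hp, huniq⟩ := hM (hspan x)
    rw [huniq _ hw, huniq _ hMxv]
  have hvpart : ∀ w, M.Adj v w → w = x := fun w hw => by
    obtain ⟨p, hp, huniq⟩ := hM (hspan v)
    rw [huniq _ hw, huniq _ hMxv.symm]
  -- y's partner a
  obtain ⟨a, hya, hyuniq⟩ := hM (hspan y)
  have hapart : ∀ w, M.Adj a w → w = y := fun w hw => by
    obtain ⟨p, hp, huniq⟩ := hM (hspan a)
    rw [huniq _ hw, huniq _ hya.symm]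
  -- basic distinctness facts
  have hxX : x ∈ X := hx
  have hvny : v ≠ y := fun h => hxy (h ▸ hxv)
  have haX : a ∈ X := by
    rcases hsides (M.adj_sub hya) with ⟨h1, _⟩ | ⟨_, h2⟩
    · exact absurd h1 (Finset.disjoint_right.mp hdisj hy)
    · exact h2
  have hanv : a ≠ v := fun h => hvnX (h ▸ haX)
  have hany : a ≠ y := fun h => (Finset.disjoint_left.mp hdisj haX) (h ▸ hy)
  have hanx : a ≠ x := fun h => hvny (hxpart y (h ▸ hya.symm)).symm
  have hxny : x ≠ y := fun h => (Finset.disjoint_left.mp hdisj hxX) (h ▸ hy)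
  have hvnx : v ≠ x := fun h => hvnX (h ▸ hxX)
  have hGva : G.Adj v a := hvall a haX
  -- the swapped matching: remove (x,v) and (a,y), add (a,v); leaves x, y unmatched
  set M'' : G.Subgraph :=
    { verts := {u | u ≠ x ∧ u ≠ y}
      Adj := fun u w => (M.Adj u w ∧ u ≠ x ∧ u ≠ y ∧ w ≠ x ∧ w ≠ y) ∨
        (u = a ∧ w = v) ∨ (u = v ∧ w = a)
      adj_sub := by
        rintro u w (⟨h, -⟩ | ⟨rfl, rfl⟩ | ⟨rfl, rfl⟩)
        · exact M.adj_sub h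
        · exact hGva.symm
        · exact hGva
      edge_vert := by
        rintro u w (⟨-, h1, h2, -⟩ | ⟨rfl, rfl⟩ | ⟨rfl, rfl⟩)
        · exact ⟨h1, h2⟩
        · exact ⟨hanx, hany⟩
        · exact ⟨hvnx, hvny⟩
      symm := by
        refine ⟨?_⟩
        rintro u w (⟨h, h1, h2, h3, h4⟩ | ⟨rfl, rfl⟩ | ⟨rfl, rfl⟩)
        · exact Or.inl ⟨h.symm, h3, h4, h1, h2⟩
        · exact Or.inr (Or.inr ⟨rfl, rfl⟩)
        · exact Or.inr (Or.inl ⟨rfl, rfl⟩) } with hM''def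
  have hM''adj : ∀ u w, M''.Adj u w ↔ ((M.Adj u w ∧ u ≠ x ∧ u ≠ y ∧ w ≠ x ∧ w ≠ y) ∨
      (u = a ∧ w = v) ∨ (u = v ∧ w = a)) := fun u w => Iff.rfl
  have hM''verts : ∀ u, u ∈ M''.verts ↔ (u ≠ x ∧ u ≠ y) := fun u => Iff.rfl
  have hM''m : M''.IsMatching := by
    intro u hu
    obtain ⟨hux, huy⟩ := (hM''verts u).mp hu
    by_cases hua : u = a
    · subst hua
      refine ⟨v, Or.inr (Or.inl ⟨rfl, rfl⟩), ?_⟩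
      rintro w (⟨h, -, -, -, hwy⟩ | ⟨-, rfl⟩ | ⟨h, -⟩)
      · exact absurd (hapart w h) hwy
      · rfl
      · exact absurd h hanv
    by_cases huv : u = v
    · subst huv
      refine ⟨a, Or.inr (Or.inr ⟨rfl, rfl⟩), ?_⟩
      rintro w (⟨h, -, -, hwx, -⟩ | ⟨h, -⟩ | ⟨-, rfl⟩)
      · exact absurd (hvpart w h) hwx
      · exact absurd h.symm hanv
      · rfl
    · obtain ⟨p, hp, huniq⟩ := hM (hspan u)
      have hpx : p ≠ x := fun h => huv (hxpart u (h ▸ hp.symm) ▸ rfl)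
      have hpy : p ≠ y := fun h => hua (hyuniq u (h ▸ hp.symm) ▸ rfl)
      refine ⟨p, Or.inl ⟨hp, hux, huy, hpx, hpy⟩, ?_⟩
      rintro w (⟨h, -⟩ | ⟨h, -⟩ | ⟨h, -⟩)
      · exact huniq _ h
      · exact absurd h hua
      · exact absurd h huv
  have hM''max : ∀ s t, G.Adj s t → s ∈ M''.verts ∨ t ∈ M''.verts := by
    intro s t hst
    by_cases hsx : s = x
    · subst hsx
      refine Or.inr ((hM''verts t).mpr ⟨hst.ne', fun h => hxy (h ▸ hst)⟩)
    by_cases hsy : s = y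
    · subst hsy
      refine Or.inr ((hM''verts t).mpr ⟨fun h => hxy (h ▸ hst.symm), hst.ne'⟩)
    · exact Or.inl ((hM''verts s).mpr ⟨hsx, hsy⟩)
  have := maximal_matching_spanning hmatched M'' hM''m hM''max x
  exact ((hM''verts x).mp this).1 rfl
end

section
/- Let G = (X ∪ Y, E) be a finite bipartite graph with a preference instance P. Then there exists at least one stable matching. -/
open SimpleGraph Finset

/-- The "deletion possible" condition: some vertex `p` has top choice `t`,
and `t` has a neighbor `q` strictly worse than `p`. -/
def CanDelete {V : Type*} (G : SimpleGraph V) (rank : V → V → ℕ) : Prop :=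
  ∃ p t q, G.Adj p t ∧ (∀ w, G.Adj p w → rank p t ≤ rank p w) ∧
    G.Adj t q ∧ rank t p < rank t q

lemma base_case {V : Type*} [Fintype V] [DecidableEq V] (G : SimpleGraph V)
    (X Y : Finset V) (hBip : _root_.IsBipartiteWith G X Y)
    (rank : V → V → ℕ) (hP : IsPrefInstance G rank)
    (hD : ¬ CanDelete G rank) :
    ∃ M : G.Subgraph, IsStableMatching rank M := by
  classical
  set A : V → V → Prop := fun a b =>
    (a ∈ X ∧ G.Adj a b ∧ ∀ w, G.Adj a w → rank a b ≤ rank a w) ∨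
    (b ∈ X ∧ G.Adj b a ∧ ∀ w, G.Adj b w → rank b a ≤ rank b w) with hA
  have hAsub : ∀ {a b}, A a b → G.Adj a b := by
    rintro a b (⟨_, h, _⟩ | ⟨_, h, _⟩)
    · exact h
    · exact h.symm
  have hAsymm : Symmetric A := by
    rintro a b (h | h)
    · exact Or.inr h
    · exact Or.inl h
  refine ⟨⟨{v | ∃ w, A v w}, A, fun h => hAsub h, fun h => ⟨_, h⟩, ⟨fun _ _ h => hAsymm h⟩⟩, ?_, ?_⟩
  · -- matching
    rintro v ⟨w0, hw0⟩
    refine ⟨w0, hw0, fun w1 hw1 => ?_⟩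
    -- uniqueness
    rcases hw1 with h1 | h1 <;> rcases hw0 with h0 | h0
    · -- both: v ∈ X, both tops of v
      exact hP v ((G.mem_neighborSet v w1).mpr h1.2.1) ((G.mem_neighborSet v w0).mpr h0.2.1)
        (le_antisymm (h1.2.2 _ h0.2.1) (h0.2.2 _ h1.2.1))
    · -- mixed: v ∈ X from h1, and w0 ∈ X, G.Adj w0 v
      rcases hBip.2.2 h0.2.1 with ⟨_, hv⟩ | ⟨hw, _⟩
      · exact absurd hv (Finset.disjoint_left.mp hBip.1 h1.1)
      · exact absurd h0.1 (Finset.disjoint_left.mp hBip.1.symm hw)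
    · rcases hBip.2.2 h1.2.1 with ⟨_, hv⟩ | ⟨hw, _⟩
      · exact absurd hv (Finset.disjoint_left.mp hBip.1 h0.1)
      · exact absurd h1.1 (Finset.disjoint_left.mp hBip.1.symm hw)
    · -- both second: w1, w0 ∈ X, v is top of each
      have hle1 : rank v w1 ≤ rank v w0 := by
        by_contra hlt
        exact hD ⟨w0, v, w1, h0.2.1, h0.2.2, h1.2.1.symm, lt_of_not_ge hlt⟩
      have hle0 : rank v w0 ≤ rank v w1 := by
        by_contra hlt
        exact hD ⟨w1, v, w0, h1.2.1, h1.2.2, h0.2.1.symm, lt_of_not_ge hlt⟩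
      exact hP v ((G.mem_neighborSet v w1).mpr h1.2.1.symm) ((G.mem_neighborSet v w0).mpr h0.2.1.symm)
        (le_antisymm hle1 hle0)
  · -- no blocking pair
    rintro ⟨x, y, hxy, hnM, hx, hy⟩
    have key : ∀ a b : V, a ∈ X → G.Adj a b →
        (∀ w, A a w → rank a b < rank a w) → False := by
      intro a b haX hab hblk
      have hne : (G.neighborFinset a).Nonempty := ⟨b, by simpa using hab⟩
      obtain ⟨t, ht, htmin⟩ := Finset.exists_min_image _ (rank a) hne
      have htadj : G.Adj a t := by simpa using ht
      have hAt : A a t := Or.inl ⟨haX, htadj, fun w hw => htmin w (by simpa using hw)⟩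
      exact absurd (htmin b (by simpa using hab)) (not_le.mpr (hblk t hAt))
    rcases hBip.2.2 hxy with ⟨hxX, _⟩ | ⟨_, hyX⟩
    · exact key x y hxX hxy hx
    · exact key y x hyX hxy.symm hy

lemma aux_lemma {V : Type*} [Fintype V] [DecidableEq V] :
    ∀ n : ℕ, ∀ G : SimpleGraph V, G.edgeSet.ncard ≤ n →
    ∀ X Y : Finset V, _root_.IsBipartiteWith G X Y →
    ∀ rank : V → V → ℕ, IsPrefInstance G rank →
    ∃ M : G.Subgraph, IsStableMatching rank M := by
  classical
  intro n
  induction n with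
  | zero =>
    intro G hcard X Y hBip rank hP
    refine base_case G X Y hBip rank hP ?_
    rintro ⟨p, t, q, hpt, _, _, _⟩
    have : G.edgeSet = ∅ := by
      have := Set.ncard_eq_zero (Set.toFinite _) |>.mp (Nat.le_zero.mp hcard)
      exact this
    exact absurd (G.mem_edgeSet.mpr hpt) (by simp [this])
  | succ n ih =>
    intro G hcard X Y hBip rank hP
    by_cases hD : CanDelete G rank
    · obtain ⟨p, t, q, hpt, htop, htq, hr⟩ := hD
      set G' : SimpleGraph V := G.deleteEdges {s(t, q)} with hG'
      have hle : G' ≤ G := G.deleteEdges_le _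
      have hcard' : G'.edgeSet.ncard ≤ n := by
        have hss : G'.edgeSet ⊂ G.edgeSet := by
          rw [hG', SimpleGraph.edgeSet_deleteEdges]
          refine (Set.ssubset_iff_of_subset Set.diff_subset).mpr ⟨s(t, q), G.mem_edgeSet.mpr htq, by simp⟩
        have := Set.ncard_lt_ncard hss (Set.toFinite _)
        omega
      have hBip' : _root_.IsBipartiteWith G' X Y :=
        ⟨hBip.1, hBip.2.1, fun a b h => hBip.2.2 (hle h)⟩
      have hP' : IsPrefInstance G' rank := fun v =>
        (hP v).mono (fun x hx => hle hx)
      obtain ⟨M', hM'match, hM'stab⟩ := ih G' hcard' X Y hBip' rank hP'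
      -- facts
      have hpq : p ≠ q := fun h => by subst h; exact lt_irrefl _ hr
      have hG'pt : G'.Adj p t := by
        rw [hG', SimpleGraph.deleteEdges_adj]
        refine ⟨hpt, ?_⟩
        simp only [Set.mem_singleton_iff, Sym2.eq_iff]
        push_neg
        constructor
        · intro h; exact absurd h hpt.ne
        · intro h; exact absurd h hpq
      -- claim: t is matched in M' to someone at least as good as p
      have claim : ∃ w, M'.Adj t w ∧ rank t w ≤ rank t p := by
        by_cases hM'pt : M'.Adj p t
        · exact ⟨p, hM'pt.symm, le_rfl⟩
        · by_contra hc
          push_neg at hc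
          refine hM'stab ⟨p, t, hG'pt, hM'pt, ?_, fun w hw => hc w hw⟩
          intro w hw
          have hGw : G.Adj p w := hle (M'.adj_sub hw)
          have hlew := htop w hGw
          rcases lt_or_eq_of_le hlew with h | h
          · exact h
          · exact absurd (hP p ((G.mem_neighborSet p t).mpr hpt) ((G.mem_neighborSet p w).mpr hGw) h ▸ hw) hM'pt
      obtain ⟨w0, hw0, hw0le⟩ := claim
      refine ⟨⟨M'.verts, M'.Adj, fun h => hle (M'.adj_sub h),
        fun h => M'.edge_vert h, M'.symm⟩, hM'match, ?_⟩
      rintro ⟨x, y, hxy, hnM, hx, hy⟩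
      by_cases hG'xy : G'.Adj x y
      · exact hM'stab ⟨x, y, hG'xy, hnM, hx, hy⟩
      · have hmem : s(x, y) = s(t, q) := by
          rw [hG', SimpleGraph.deleteEdges_adj] at hG'xy
          push_neg at hG'xy
          simpa using hG'xy hxy
        rw [Sym2.eq_iff] at hmem
        rcases hmem with ⟨hxt, hyq⟩ | ⟨hxq, hyt⟩
        · subst hxt; subst hyq
          have := hx w0 hw0
          omega
        · subst hxq; subst hyt
          have := hy w0 hw0
          omega
    · exact base_case G X Y hBip rank hP hD

theorem stmt_15 {V : Type*} [Fintype V] [DecidableEq V] (G : SimpleGraph V)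
    [DecidableRel G.Adj] (X Y : Finset V) (hBip : _root_.IsBipartiteWith G X Y)
    (rank : V → V → ℕ) (hP : IsPrefInstance G rank) :
    ∃ M : G.Subgraph, IsStableMatching rank M :=
  aux_lemma G.edgeSet.ncard G le_rfl X Y hBip rank hP
end
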